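/- arXiv:1401.7598 — 2 statements merged into one kernel-verified Lean document; each statement's English description precedes it below -/
import Mathlib

section
/- (Erdős–Nathanson) Let A be a set of nonnegative integers and for each nonnegative integer n let f(n) be the number of representations of n as a sum n = a + a' with a, a' ∈ A and a ≤ a'. If there exists a constant c > 1/log(4/3) such that f(n) > c·log n for all sufficiently large n, then A contains a subset that is a minimal asymptotic basis of order 2. -/
open Pointwise Filter

/-- The counting function of a set of nonnegative integers: the number of
positive elements of `A` that are at most `n`. -/
noncomputable def countingFn (A : Set ℕ) (n : ℕ) : ℕ := (A ∩ Set.Icc 1 n).ncard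

/-- The Shnirel'man density `σ(A) = inf_{n ≥ 1} A(n)/n`. -/
noncomputable def shnirelmanDensity (A : Set ℕ) : ℝ :=
  ⨅ n : {n : ℕ // 0 < n}, (countingFn A (n : ℕ) : ℝ) / ((n : ℕ) : ℝ)

/-- The lower asymptotic density `d_L(A) = liminf_{n → ∞} A(n)/n`. -/
noncomputable def lowerDensity (A : Set ℕ) : ℝ :=
  liminf (fun n : ℕ => (countingFn A n : ℝ) / (n : ℝ)) atTop

/-- `A` is an additive basis of order `h`: every nonnegative integer is the
sum of exactly `h` elements of `A` (with repetitions allowed). -/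
def IsBasisOfOrder (A : Set ℕ) (h : ℕ) : Prop :=
  ∀ n : ℕ, ∃ c : Fin h → ℕ, (∀ i, c i ∈ A) ∧ ∑ i, c i = n

/-- `A` is an asymptotic basis of order `h`: every sufficiently large integer
is the sum of exactly `h` elements of `A` (with repetitions allowed). -/
def IsAsymptoticBasisOfOrder (A : Set ℕ) (h : ℕ) : Prop :=
  ∀ᶠ n : ℕ in atTop, ∃ c : Fin h → ℕ, (∀ i, c i ∈ A) ∧ ∑ i, c i = n

/-- A minimal asymptotic basis of order `h` is an asymptotic basis of order `h`
no proper subset of which is an asymptotic basis of order `h`. -/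
def IsMinimalAsymptoticBasisOfOrder (A : Set ℕ) (h : ℕ) : Prop :=
  IsAsymptoticBasisOfOrder A h ∧
    ∀ B : Set ℕ, B ⊂ A → ¬ IsAsymptoticBasisOfOrder B h

/-- A maximal asymptotic nonbasis of order `h` is a set that is not an
asymptotic basis of order `h`, but such that adjoining any element outside it
produces an asymptotic basis of order `h`. -/
def IsMaximalAsymptoticNonbasisOfOrder (A : Set ℕ) (h : ℕ) : Prop :=
  ¬ IsAsymptoticBasisOfOrder A h ∧
    ∀ b : ℕ, b ∉ A → IsAsymptoticBasisOfOrder (A ∪ {b}) h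


namespace EN

open Finset

attribute [local instance] Classical.propDecidable

/-- Small parts of alive representations of `m` (deleted set `D`). -/
noncomputable def reps (A : Set ℕ) (D : Finset ℕ) (m : ℕ) : Finset ℕ :=
  (Finset.range (m + 1)).filter
    (fun x => x ∈ A ∧ (m - x) ∈ A ∧ x ∉ D ∧ (m - x) ∉ D ∧ 2 * x ≤ m)

lemma mem_reps {A : Set ℕ} {D : Finset ℕ} {m x : ℕ} :
    x ∈ reps A D m ↔ x ∈ A ∧ (m - x) ∈ A ∧ x ∉ D ∧ (m - x) ∉ D ∧ 2 * x ≤ m := by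
  unfold reps
  simp only [mem_filter, Finset.mem_range]
  constructor
  · rintro ⟨-, h⟩; exact h
  · rintro h; exact ⟨by omega, h⟩

lemma reps_anti {A : Set ℕ} {D E : Finset ℕ} (h : D ⊆ E) (m : ℕ) :
    reps A E m ⊆ reps A D m := by
  intro x hx
  rw [mem_reps] at hx ⊢
  exact ⟨hx.1, hx.2.1, fun hc => hx.2.2.1 (h hc), fun hc => hx.2.2.2.1 (h hc), hx.2.2.2.2⟩

lemma reps_subset_A {A : Set ℕ} {D : Finset ℕ} {m x : ℕ} (hx : x ∈ reps A D m) :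
    x ∈ A ∧ (m - x) ∈ A := ⟨(mem_reps.1 hx).1, (mem_reps.1 hx).2.1⟩

/-- distinct representations of `m` are disjoint pairs -/
lemma reps_pair_eq {A : Set ℕ} {D : Finset ℕ} {m x y : ℕ}
    (hx : x ∈ reps A D m) (hy : y ∈ reps A D m) (h : y = m - x) : y = x := by
  rw [mem_reps] at hx hy
  omega

lemma reps_union_filter (A : Set ℕ) (D G : Finset ℕ) (m : ℕ) :
    reps A (D ∪ G) m = (reps A D m).filter (fun u => u ∉ G ∧ (m - u) ∉ G) := by
  ext x
  simp only [mem_reps, mem_filter, Finset.mem_union]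
  tauto

lemma card_reps_filter (A : Set ℕ) (D G : Finset ℕ) (m : ℕ) :
    (reps A D m).card ≤ ((reps A D m).filter (fun u => u ∉ G ∧ (m - u) ∉ G)).card + G.card := by
  classical
  have h1 : (reps A D m).card = ((reps A D m).filter (fun u => u ∉ G ∧ (m - u) ∉ G)).card
      + ((reps A D m).filter (fun u => ¬ (u ∉ G ∧ (m - u) ∉ G))).card := by
    exact (Finset.card_filter_add_card_filter_not _).symm
  rw [h1]
  have h2 : ((reps A D m).filter (fun u => ¬ (u ∉ G ∧ (m - u) ∉ G))).card ≤ G.card := by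
    apply Finset.card_le_card_of_injOn (fun u => if u ∈ G then u else m - u)
    · intro u hu
      simp only [Finset.coe_filter, Set.mem_setOf_eq] at hu
      by_cases h : u ∈ G
      · simpa [h]
      · have := hu.2
        push_neg at this
        simp [h]
        exact this h
    · intro u hu v hv huv
      simp only [Finset.coe_filter, Set.mem_setOf_eq] at hu hv
      have h3 := mem_reps.1 hu.1
      have h4 := mem_reps.1 hv.1
      by_cases h1 : u ∈ G <;> by_cases h2 : v ∈ G <;> simp [h1, h2] at huv <;> omega
  omega

lemma card_reps_ge (A : Set ℕ) (D : Finset ℕ) (m : ℕ) :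
    (reps A ∅ m).card ≤ (reps A D m).card + D.card := by
  have := card_reps_filter A ∅ D m
  rw [← reps_union_filter] at this
  simpa using this


section Counting

variable (lit : ℕ → Option (ℕ × Bool)) (pa : ℕ → ℕ)

/-- `z` is deleted according to the pattern `S`. -/
def delP (S : Finset ℕ) (z : ℕ) : Prop :=
  ∃ cb : ℕ × Bool, lit z = some cb ∧ ((cb.1 ∈ S) ↔ cb.2 = true)

/-- the representation with small part `u` is destroyed -/
def killed (S : Finset ℕ) (u : ℕ) : Prop := delP lit S u ∨ delP lit S (pa u)

variable (C : Finset ℕ)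

/-- patterns killing all representations in `F` -/
noncomputable def KK (F : Finset ℕ) : Finset (Finset ℕ) :=
  C.powerset.filter (fun S => ∀ u ∈ F, killed lit pa S u)

/-- the (at most two) coins of the pair `{u, pa u}` -/
noncomputable def coins (u : ℕ) : Finset ℕ :=
  ((lit u).map Prod.fst).toFinset ∪ ((lit (pa u)).map Prod.fst).toFinset

lemma mem_coins {u cc : ℕ} :
    cc ∈ coins lit pa u ↔ (∃ b, lit u = some (cc, b)) ∨ (∃ b, lit (pa u) = some (cc, b)) := by
  unfold coins
  simp only [Finset.mem_union, Option.mem_toFinset, Option.mem_def, Option.map_eq_some_iff]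
  constructor
  · rintro (⟨p, hp, rfl⟩ | ⟨p, hp, rfl⟩)
    · exact Or.inl ⟨p.2, by simpa using hp⟩
    · exact Or.inr ⟨p.2, by simpa using hp⟩
  · rintro (⟨b, hb⟩ | ⟨b, hb⟩)
    · exact Or.inl ⟨(cc, b), hb, rfl⟩
    · exact Or.inr ⟨(cc, b), hb, rfl⟩

lemma card_coins (u : ℕ) : (coins lit pa u).card ≤ 2 := by
  unfold coins
  refine le_trans (Finset.card_union_le _ _) ?_
  have h1 : ∀ o : Option (ℕ × Bool), (o.map Prod.fst).toFinset.card ≤ 1 := by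
    rintro (_ | p) <;> simp
  exact Nat.add_le_add (h1 _) (h1 _)

/-- the pattern modified so as to spare both `u` and `pa u` -/
noncomputable def spare (S : Finset ℕ) (u : ℕ) : Finset ℕ :=
  (S \ coins lit pa u) ∪
    ((coins lit pa u).filter
      (fun cc => lit u = some (cc, false) ∨ lit (pa u) = some (cc, false)))

lemma mem_spare {S : Finset ℕ} {u cc : ℕ} :
    cc ∈ spare lit pa S u ↔
      (cc ∈ S ∧ cc ∉ coins lit pa u) ∨
      (cc ∈ coins lit pa u ∧
        (lit u = some (cc, false) ∨ lit (pa u) = some (cc, false))) := by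
  unfold spare
  simp only [Finset.mem_union, Finset.mem_sdiff, Finset.mem_filter]

lemma spare_sdiff (S : Finset ℕ) (u : ℕ) :
    spare lit pa S u \ coins lit pa u = S \ coins lit pa u := by
  ext cc
  simp only [Finset.mem_sdiff, mem_spare]
  tauto

lemma spare_subset {S : Finset ℕ} {u : ℕ} (hS : S ⊆ C)
    (hlitC : ∀ z p, lit z = some p → p.1 ∈ C) : spare lit pa S u ⊆ C := by
  intro cc hcc
  rw [mem_spare lit pa] at hcc
  rcases hcc with ⟨h1, -⟩ | ⟨h1, -⟩
  · exact hS h1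
  · rcases (mem_coins lit pa).1 h1 with ⟨b, hb⟩ | ⟨b, hb⟩
    · exact hlitC _ _ hb
    · exact hlitC _ _ hb

lemma spare_not_killed {S : Finset ℕ} {u : ℕ}
    (hccu : ∀ c b b', lit u = some (c, b) → lit (pa u) = some (c, b') → pa u = u) :
    ¬ killed lit pa (spare lit pa S u) u := by
  rintro (⟨⟨cc, bb⟩, hl, hiff⟩ | ⟨⟨cc, bb⟩, hl, hiff⟩)
  · have hcoin : cc ∈ coins lit pa u := (mem_coins lit pa).2 (Or.inl ⟨bb, hl⟩)
    cases bb with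
    | true =>
      have hmem : cc ∈ spare lit pa S u := hiff.2 rfl
      rw [mem_spare lit pa] at hmem
      rcases hmem with ⟨-, h⟩ | ⟨-, (h | h)⟩
      · exact h hcoin
      · rw [hl] at h; exact (by simpa using h : False)
      · have := hccu cc true false hl h
        rw [this, hl] at h
        exact (by simpa using h : False)
    | false =>
      have hmem : cc ∈ spare lit pa S u :=
        (mem_spare lit pa).2 (Or.inr ⟨hcoin, Or.inl hl⟩)
      simpa using hiff.1 hmem
  · have hcoin : cc ∈ coins lit pa u := (mem_coins lit pa).2 (Or.inr ⟨bb, hl⟩)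
    cases bb with
    | true =>
      have hmem : cc ∈ spare lit pa S u := hiff.2 rfl
      rw [mem_spare lit pa] at hmem
      rcases hmem with ⟨-, h⟩ | ⟨-, (h | h)⟩
      · exact h hcoin
      · have := hccu cc false true h hl
        rw [this, h] at hl
        exact (by simpa using hl : False)
      · rw [hl] at h; exact (by simpa using h : False)
    | false =>
      have hmem : cc ∈ spare lit pa S u :=
        (mem_spare lit pa).2 (Or.inr ⟨hcoin, Or.inr hl⟩)
      simpa using hiff.1 hmem

lemma spare_killed_mono {S : Finset ℕ} {u w : ℕ}
    (hinj : ∀ z z' p, lit z = some p → lit z' = some p → z = z')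
    (hccu : ∀ c b b', lit u = some (c, b) → lit (pa u) = some (c, b') → pa u = u)
    (hzw : w ≠ u ∧ w ≠ pa u ∧ pa w ≠ u ∧ pa w ≠ pa u)
    (hk : killed lit pa S w) : killed lit pa (spare lit pa S u) w := by
  -- it suffices to treat a single deleted element z ∈ {w, pa w}
  have key : ∀ z, z ≠ u → z ≠ pa u → delP lit S z → delP lit (spare lit pa S u) z := by
    rintro z hz1 hz2 ⟨⟨cc, bb⟩, hl, hiff⟩
    by_cases hcoin : cc ∈ coins lit pa u
    · -- z is deleted by the modified pattern in all cases
      refine ⟨(cc, bb), hl, ?_⟩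
      have hsp : cc ∈ spare lit pa S u ↔
          (lit u = some (cc, false) ∨ lit (pa u) = some (cc, false)) := by
        rw [mem_spare lit pa]
        constructor
        · rintro (⟨-, h⟩ | ⟨-, h⟩)
          · exact absurd hcoin h
          · exact h
        · intro h; exact Or.inr ⟨hcoin, h⟩
      rcases (mem_coins lit pa).1 hcoin with ⟨b₀, hb₀⟩ | ⟨b₀, hb₀⟩
      · -- lit u = some (cc, b₀)
        have hne : b₀ ≠ bb := by
          intro h; rw [h] at hb₀; exact hz1 (hinj _ _ _ hl hb₀)
        cases bb with
        | true =>
          have : b₀ = false := by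
            cases b₀
            · rfl
            · exact absurd rfl hne
          rw [this] at hb₀
          exact iff_of_true (hsp.2 (Or.inl hb₀)) rfl
        | false =>
          have hb0t : b₀ = true := by
            cases b₀
            · exact absurd rfl hne
            · rfl
          rw [hb0t] at hb₀
          have : cc ∉ spare lit pa S u := by
            rw [hsp]
            rintro (h | h)
            · rw [hb₀] at h; exact (by simpa using h : False)
            · have := hccu cc true false hb₀ h
              rw [this, hb₀] at h
              exact (by simpa using h : False)
          simp only [this, false_iff]
          simp
      · -- lit (pa u) = some (cc, b₀)
        have hne : b₀ ≠ bb := by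
          intro h; rw [h] at hb₀; exact hz2 (hinj _ _ _ hl hb₀)
        cases bb with
        | true =>
          have : b₀ = false := by
            cases b₀
            · rfl
            · exact absurd rfl hne
          rw [this] at hb₀
          exact iff_of_true (hsp.2 (Or.inr hb₀)) rfl
        | false =>
          have hb0t : b₀ = true := by
            cases b₀
            · exact absurd rfl hne
            · rfl
          rw [hb0t] at hb₀
          have : cc ∉ spare lit pa S u := by
            rw [hsp]
            rintro (h | h)
            · have := hccu cc false true h hb₀
              rw [this, h] at hb₀
              exact (by simpa using hb₀ : False)
            · rw [hb₀] at h; exact (by simpa using h : False)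
          simp only [this, false_iff]
          simp
    · -- coin not touched: deletion status unchanged
      refine ⟨(cc, bb), hl, ?_⟩
      have : cc ∈ spare lit pa S u ↔ cc ∈ S := by
        rw [mem_spare lit pa]
        constructor
        · rintro (⟨h, -⟩ | ⟨h, -⟩)
          · exact h
          · exact absurd h hcoin
        · intro h; exact Or.inl ⟨h, hcoin⟩
      rw [this]
      exact hiff
  rcases hk with h | h
  · exact Or.inl (key w hzw.1 hzw.2.1 h)
  · exact Or.inr (key (pa w) hzw.2.2.1 hzw.2.2.2 h)

lemma count_step
    (hlitC : ∀ z p, lit z = some p → p.1 ∈ C)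
    (hinj : ∀ z z' p, lit z = some p → lit z' = some p → z = z')
    {u : ℕ} {F₀ : Finset ℕ}
    (hdisj : ∀ w ∈ F₀, w ≠ u ∧ w ≠ pa u ∧ pa w ≠ u ∧ pa w ≠ pa u)
    (hccu : ∀ c b b', lit u = some (c, b) → lit (pa u) = some (c, b') → pa u = u) :
    4 * (KK lit pa C (insert u F₀)).card ≤ 3 * (KK lit pa C F₀).card := by
  classical
  have hmap : ∀ (F : Finset ℕ), ∀ S ∈ KK lit pa C F, S \ coins lit pa u ∈ C.powerset := by
    intro F S hS
    rw [Finset.mem_powerset]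
    exact Finset.sdiff_subset.trans (Finset.mem_powerset.1 (Finset.mem_of_mem_filter S hS))
  rw [Finset.card_eq_sum_card_fiberwise (hmap (insert u F₀)),
      Finset.card_eq_sum_card_fiberwise (hmap F₀), Finset.mul_sum, Finset.mul_sum]
  apply Finset.sum_le_sum
  intro t _
  set Ki := (KK lit pa C (insert u F₀)).filter (fun S => S \ coins lit pa u = t) with hKi
  set K0 := (KK lit pa C F₀).filter (fun S => S \ coins lit pa u = t) with hK0
  rcases Ki.eq_empty_or_nonempty with he | ⟨S₀, hS₀⟩
  · rw [he]; simp
  have hS₀' := Finset.mem_filter.1 hS₀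
  have hS₀K := Finset.mem_filter.1 hS₀'.1
  have hS₀C : S₀ ⊆ C := Finset.mem_powerset.1 hS₀K.1
  set σ := spare lit pa S₀ u with hσ
  have hσK0 : σ ∈ K0 := by
    rw [hK0, Finset.mem_filter]
    constructor
    · rw [KK, Finset.mem_filter]
      refine ⟨Finset.mem_powerset.2 (spare_subset lit pa C hS₀C hlitC), ?_⟩
      intro w hw
      exact spare_killed_mono lit pa hinj hccu (hdisj w hw)
        (hS₀K.2 w (Finset.mem_insert_of_mem hw))
    · rw [spare_sdiff]
      exact hS₀'.2
  have hσKi : σ ∉ Ki := by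
    rw [hKi, Finset.mem_filter]
    rintro ⟨h1, -⟩
    rw [KK, Finset.mem_filter] at h1
    exact spare_not_killed lit pa hccu (h1.2 u (Finset.mem_insert_self u F₀))
  have hsub : Ki ⊆ K0.erase σ := by
    intro S hS
    have hS' := Finset.mem_filter.1 hS
    have hSK := Finset.mem_filter.1 hS'.1
    rw [Finset.mem_erase]
    constructor
    · rintro rfl
      exact hσKi hS
    · rw [hK0, Finset.mem_filter]
      refine ⟨?_, hS'.2⟩
      rw [KK, Finset.mem_filter]
      exact ⟨hSK.1, fun w hw => hSK.2 w (Finset.mem_insert_of_mem hw)⟩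
  have hK0card : K0.card ≤ 4 := by
    have h1 : K0.card ≤ ((coins lit pa u).powerset).card := by
      apply Finset.card_le_card_of_injOn (fun S => S ∩ coins lit pa u)
      · intro S _
        rw [Finset.mem_coe, Finset.mem_powerset]
        exact Finset.inter_subset_right
      · intro S hS S' hS' h
        have e1 : S \ coins lit pa u = t := (Finset.mem_filter.1 hS).2
        have e2 : S' \ coins lit pa u = t := (Finset.mem_filter.1 hS').2
        have h' : S ∩ coins lit pa u = S' ∩ coins lit pa u := h
        rw [← Finset.sdiff_union_inter S (coins lit pa u),
          ← Finset.sdiff_union_inter S' (coins lit pa u), e1, e2, h']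
    have h2 : ((coins lit pa u).powerset).card ≤ 4 := by
      rw [Finset.card_powerset]
      calc 2 ^ (coins lit pa u).card ≤ 2 ^ 2 :=
            Nat.pow_le_pow_right (by norm_num) (card_coins lit pa u)
        _ = 4 := by norm_num
    exact h1.trans h2
  have hr : Ki.card ≤ K0.card - 1 := by
    calc Ki.card ≤ (K0.erase σ).card := Finset.card_le_card hsub
      _ = K0.card - 1 := Finset.card_erase_of_mem hσK0
  have hq1 : 1 ≤ K0.card := Finset.card_pos.2 ⟨σ, hσK0⟩
  omega

lemma count_main
    (hlitC : ∀ z p, lit z = some p → p.1 ∈ C)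
    (hinj : ∀ z z' p, lit z = some p → lit z' = some p → z = z')
    (F : Finset ℕ)
    (hdisj : ∀ u ∈ F, ∀ w ∈ F, u ≠ w → w ≠ u ∧ w ≠ pa u ∧ pa w ≠ u ∧ pa w ≠ pa u)
    (hcc : ∀ u ∈ F, ∀ c b b', lit u = some (c, b) → lit (pa u) = some (c, b') → pa u = u) :
    (KK lit pa C F).card * 4 ^ F.card ≤ 2 ^ C.card * 3 ^ F.card := by
  classical
  induction F using Finset.induction_on with
  | empty =>
    simp only [Finset.card_empty, pow_zero, mul_one]
    calc (KK lit pa C ∅).card ≤ C.powerset.card := Finset.card_filter_le _ _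
      _ = 2 ^ C.card := Finset.card_powerset C
  | @insert u F₀ hu ih =>
    have hdisj₀ : ∀ v ∈ F₀, ∀ w ∈ F₀, v ≠ w → w ≠ v ∧ w ≠ pa v ∧ pa w ≠ v ∧ pa w ≠ pa v :=
      fun v hv w hw => hdisj v (Finset.mem_insert_of_mem hv) w (Finset.mem_insert_of_mem hw)
    have hcc₀ : ∀ v ∈ F₀, ∀ c b b', lit v = some (c, b) → lit (pa v) = some (c, b') → pa v = v :=
      fun v hv => hcc v (Finset.mem_insert_of_mem hv)
    have ih' := ih hdisj₀ hcc₀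
    have hstep := count_step lit pa C hlitC hinj
      (fun w hw => hdisj u (Finset.mem_insert_self u F₀) w (Finset.mem_insert_of_mem hw)
        (fun h => hu (h ▸ hw)))
      (hcc u (Finset.mem_insert_self u F₀))
    rw [Finset.card_insert_of_notMem hu, pow_succ, pow_succ]
    calc (KK lit pa C (insert u F₀)).card * (4 ^ F₀.card * 4)
        = (4 * (KK lit pa C (insert u F₀)).card) * 4 ^ F₀.card := by ring
      _ ≤ (3 * (KK lit pa C F₀).card) * 4 ^ F₀.card :=
          Nat.mul_le_mul_right _ hstep
      _ = 3 * ((KK lit pa C F₀).card * 4 ^ F₀.card) := by ring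
      _ ≤ 3 * (2 ^ C.card * 3 ^ F₀.card) := Nat.mul_le_mul_left _ ih'
      _ = 2 ^ C.card * (3 ^ F₀.card * 3) := by ring

end Counting


lemma tail_bound {β : ℝ} (hβ : 1 < β) :
    ∃ Mt : ℕ, ∀ F : Finset ℕ, (∀ m ∈ F, Mt < m) → ∑ m ∈ F, ((m:ℝ) ^ (-β)) < 1 := by
  have hs : Summable (fun n : ℕ => (n:ℝ) ^ (-β)) := by
    rw [Real.summable_nat_rpow]
    linarith
  have hnn : ∀ i : ℕ, 0 ≤ ((i:ℝ) ^ (-β)) := fun i => Real.rpow_nonneg (Nat.cast_nonneg i) _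
  have htend := hs.hasSum.tendsto_sum_nat
  have h2 : Tendsto (fun k => (∑' n : ℕ, (n:ℝ) ^ (-β)) - ∑ n ∈ Finset.range k, (n:ℝ) ^ (-β))
      atTop (nhds 0) := by
    have := tendsto_const_nhds (x := (∑' n : ℕ, (n:ℝ) ^ (-β))) (f := atTop (α := ℕ)) |>.sub htend
    simpa using this
  obtain ⟨k, hk⟩ := (h2.eventually_lt_const (by norm_num : (0:ℝ) < 1)).exists
  refine ⟨k, fun F hF => ?_⟩
  have hdisj : Disjoint F (Finset.range k) := by
    rw [Finset.disjoint_left]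
    intro m hm hmk
    have := hF m hm
    rw [Finset.mem_range] at hmk
    omega
  have hle : ∑ m ∈ F ∪ Finset.range k, ((m:ℝ) ^ (-β)) ≤ ∑' n : ℕ, (n:ℝ) ^ (-β) :=
    hs.sum_le_tsum _ (fun i _ => hnn i)
  rw [Finset.sum_union hdisj] at hle
  linarith

lemma pow34_le {c₂ : ℝ} {m g : ℕ} (hm : 1 ≤ m)
    (hg : c₂ * Real.log m ≤ (g:ℝ)) :
    ((3:ℝ)/4) ^ g ≤ (m:ℝ) ^ (-(c₂ * Real.log (4/3))) := by
  have hm0 : (0:ℝ) < m := by exact_mod_cast hm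
  have h34 : ((3:ℝ)/4) ^ g = ((3:ℝ)/4) ^ ((g:ℕ):ℝ) := (Real.rpow_natCast _ g).symm
  rw [h34]
  have h1 : ((3:ℝ)/4) ^ ((g:ℕ):ℝ) ≤ ((3:ℝ)/4) ^ (c₂ * Real.log m) :=
    Real.rpow_le_rpow_of_exponent_ge (by norm_num) (by norm_num) hg
  refine h1.trans (le_of_eq ?_)
  rw [Real.rpow_def_of_pos (by norm_num : (0:ℝ) < 3/4), Real.rpow_def_of_pos hm0]
  congr 1
  have hlog34 : Real.log (3/4) = -Real.log (4/3) := by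
    rw [show ((3:ℝ)/4) = ((4:ℝ)/3)⁻¹ by norm_num, Real.log_inv]
  rw [hlog34]
  ring

lemma constants_exist {c : ℝ} (hc : 1 / Real.log (4/3) < c) :
    ∃ c₁ c₂ : ℝ, 0 < c₂ ∧ c₂ < c₁ ∧ c₁ < c ∧ 1 < c₂ * Real.log (4/3) := by
  have hlog : 0 < Real.log (4/3) := Real.log_pos (by norm_num)
  set δ : ℝ := (c - 1 / Real.log (4/3)) / 3 with hδ
  have hδ0 : 0 < δ := by
    have : 0 < c - 1 / Real.log (4/3) := by linarith
    positivity
  refine ⟨c - δ, c - 2*δ, ?_, by linarith, by linarith, ?_⟩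
  · have h1 : 0 < 1 / Real.log (4/3) := by positivity
    have : c - 2*δ = 1 / Real.log (4/3) + δ := by rw [hδ]; ring
    linarith
  · have : c - 2*δ = 1 / Real.log (4/3) + δ := by rw [hδ]; ring
    rw [this]
    have h2 : (1 / Real.log (4/3)) * Real.log (4/3) = 1 := by
      field_simp
    nlinarith [mul_pos hδ0 hlog]


/-- The state of the recursive construction. -/
structure St where
  D : Finset ℕ
  P : Finset ℕ
  M : ℕ

section Main

variable (A : Set ℕ) (c c₁ c₂ : ℝ) (N₁ Mt : ℕ)

/-- The invariant maintained by the construction. -/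
def Inv (s : St) : Prop :=
  (↑s.P : Set ℕ) ⊆ A ∧ Disjoint s.P s.D ∧ N₁ ≤ s.M ∧ Mt ≤ s.M ∧
    ((s.D.card : ℝ) ≤ (c - c₁) * Real.log s.M) ∧
    (∀ m, N₁ ≤ m → m ≤ s.M → ∃ x, x ∈ reps A s.D m ∧ x ∈ s.P ∧ m - x ∈ s.P)

variable (hAc : ∀ m, N₁ ≤ m → c * Real.log m < ((reps A ∅ m).card : ℝ))
  (hN₁ : 2 ≤ N₁) (hc₁ : c₁ < c) (hc₁₂ : c₂ < c₁) (hc₂0 : 0 < c₂)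
  (hMt : ∀ F : Finset ℕ, (∀ m ∈ F, Mt < m) →
    ∑ m ∈ F, ((m:ℝ) ^ (-(c₂ * Real.log (4/3)))) < 1)

include hAc hN₁ in
lemma exists_large_elt (hc0 : 0 < c) (D : Finset ℕ) (R : ℕ) :
    ∃ a', a' ∈ A ∧ a' ∉ D ∧ R ≤ a' := by
  set m := max N₁ (max (2*R) (2 * (D.sup id) + 2)) with hm
  have hmN : N₁ ≤ m := le_max_left _ _
  have hm2 : 2 ≤ m := hN₁.trans hmN
  have hlm : 0 < Real.log m := Real.log_pos (by exact_mod_cast hm2)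
  have hfm : 0 < (reps A ∅ m).card := by
    have h := hAc m hmN
    by_contra h0
    push_neg at h0
    interval_cases h1 : (reps A ∅ m).card
    simp only [Nat.cast_zero] at h
    nlinarith
  obtain ⟨x, hx⟩ := Finset.card_pos.1 hfm
  rw [mem_reps] at hx
  refine ⟨m - x, hx.2.1, ?_, ?_⟩
  · intro hmem
    have := Finset.le_sup (f := id) hmem
    simp only [id] at this
    omega
  · omega

set_option maxHeartbeats 1000000 in
include hAc hN₁ hc₁ hc₁₂ hc₂0 hMt in
theorem step (hc0 : 0 < c) (s : St) (hs : Inv A c c₁ N₁ Mt s) (b L : ℕ)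
    (hbA : b ∈ A) (hbD : b ∉ s.D) :
    ∃ t : St, Inv A c c₁ N₁ Mt t ∧ s.D ⊆ t.D ∧ s.P ⊆ t.P ∧ s.M ≤ t.M ∧ L ≤ t.M ∧
      ∃ n, L ≤ n ∧ b ∈ t.P ∧ (n - b) ∈ t.P ∧
        (∀ x ∈ reps A t.D n, x = b) ∧ b ∈ reps A t.D n := by
  classical
  obtain ⟨hPA, hPD, hN₁M, hMtM, hDcard, hcov⟩ := hs
  have hd12 : (0:ℝ) < c₁ - c₂ := by linarith
  have hd01 : (0:ℝ) < c - c₁ := by linarith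
  -- choose the partner a' (hence the witness n = b + a')
  set R₀ : ℕ := max (max (L + 1) (s.M + 1))
      (max (2*b + 1) (max (2*(s.P.sup id) + 1)
        (2 * Nat.ceil (Real.exp (((s.P.card : ℝ) + 1) / (c₁ - c₂))) + 2))) with hR₀
  obtain ⟨a', ha'A, ha'D, ha'R⟩ := exists_large_elt A c N₁ hAc hN₁ hc0 s.D R₀
  set n := b + a' with hn
  have hnR : R₀ ≤ n := by omega
  have hnL : L ≤ n := by
    have : L + 1 ≤ R₀ := le_trans (le_max_left _ _) (le_max_left _ _)
    omega
  have hnM : s.M < n := by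
    have : s.M + 1 ≤ R₀ := le_trans (le_max_right _ _) (le_max_left _ _)
    omega
  have hnb : 2*b < n := by
    have : 2*b + 1 ≤ R₀ := le_trans (le_max_left _ _) (le_max_right _ _)
    omega
  have hnP : ∀ p ∈ s.P, 2*p < n := by
    intro p hp
    have h1 : p ≤ s.P.sup id := Finset.le_sup (f := id) hp
    have h2 : 2*(s.P.sup id) + 1 ≤ R₀ :=
      le_trans (le_trans (le_max_left _ _) (le_max_right _ _)) (le_max_right _ _)
    omega
  have hnexp : ((s.P.card : ℝ) + 1) ≤ (c₁ - c₂) * Real.log ((n:ℝ)/2) := by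
    have h2 : 2 * Nat.ceil (Real.exp (((s.P.card : ℝ) + 1) / (c₁ - c₂))) + 2 ≤ R₀ :=
      le_trans (le_trans (le_max_right _ _) (le_max_right _ _)) (le_max_right _ _)
    have h3 : Real.exp (((s.P.card : ℝ) + 1) / (c₁ - c₂)) ≤ ((n:ℝ)/2) := by
      have h4 : (Nat.ceil (Real.exp (((s.P.card : ℝ) + 1) / (c₁ - c₂))) : ℝ) ≤ ((n:ℝ)/2) := by
        have : 2 * Nat.ceil (Real.exp (((s.P.card : ℝ) + 1) / (c₁ - c₂))) ≤ n := by omega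
        have := (Nat.cast_le (α := ℝ)).2 this
        push_cast at this
        linarith
      exact le_trans (Nat.le_ceil _) h4
    have h5 := Real.log_le_log (Real.exp_pos _) h3
    rw [Real.log_exp] at h5
    calc ((s.P.card : ℝ) + 1) = (c₁ - c₂) * (((s.P.card : ℝ) + 1) / (c₁ - c₂)) := by
          field_simp
      _ ≤ (c₁ - c₂) * Real.log ((n:ℝ)/2) := by
          apply mul_le_mul_of_nonneg_left h5 (le_of_lt hd12)
  have hnN₁ : N₁ < n := lt_of_le_of_lt hN₁M hnM
  -- the alive representations of n, the coins, the forced deletions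
  set SR := reps A s.D n with hSR
  set C : Finset ℕ := SR.filter (fun x => x ∉ s.P ∧ x ≠ b ∧ 2*x ≠ n) with hC
  set forced : Finset ℕ :=
    ((SR.filter (fun x => x ∈ s.P ∧ x ≠ b)).image (fun x => n - x)) ∪
      (SR.filter (fun x => 2*x = n)) with hforced
  set DelF : Finset ℕ → Finset ℕ :=
    (fun S => forced ∪ S ∪ (C \ S).image (fun x => n - x)) with hDelF
  have hbSR : b ∈ SR := by
    rw [hSR, mem_reps]
    refine ⟨hbA, ?_, hbD, ?_, by omega⟩
    · have : n - b = a' := by omega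
      rw [this]; exact ha'A
    · have : n - b = a' := by omega
      rw [this]; exact ha'D
  have hCsub : ∀ x ∈ C, 2*x ≤ n ∧ x ∉ s.P ∧ x ≠ b ∧ 2*x ≠ n := by
    intro x hx
    rw [hC, Finset.mem_filter] at hx
    exact ⟨(mem_reps.1 hx.1).2.2.2.2, hx.2⟩
  have hforced_big : ∀ z ∈ forced, n ≤ 2*z := by
    intro z hz
    rw [hforced, Finset.mem_union] at hz
    rcases hz with hz | hz
    · rw [Finset.mem_image] at hz
      obtain ⟨x, hx, rfl⟩ := hz
      have := (mem_reps.1 (Finset.mem_filter.1 hx).1).2.2.2.2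
      omega
    · have := (Finset.mem_filter.1 hz).2
      omega
  have hforced_card : forced.card ≤ s.P.card + 1 := by
    rw [hforced]
    refine le_trans (Finset.card_union_le _ _) ?_
    have h1 : ((SR.filter (fun x => x ∈ s.P ∧ x ≠ b)).image (fun x => n - x)).card
        ≤ s.P.card := by
      refine le_trans Finset.card_image_le (Finset.card_le_card ?_)
      intro x hx
      exact (Finset.mem_filter.1 hx).2.1
    have h2 : (SR.filter (fun x => 2*x = n)).card ≤ 1 := by
      apply Finset.card_le_one.2
      intro x hx y hy
      have hx' := (Finset.mem_filter.1 hx).2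
      have hy' := (Finset.mem_filter.1 hy).2
      omega
    omega
  -- elements of s.P and the chosen pair are never deleted
  have hPdel : ∀ S ∈ C.powerset, ∀ p ∈ s.P, p ∉ DelF S := by
    intro S hS p hp
    have hpn := hnP p hp
    intro hmem
    simp only [hDelF, Finset.mem_union, Finset.mem_image] at hmem
    rcases hmem with (hm | hm) | ⟨x, hx, hxe⟩
    · exact absurd (hforced_big p hm) (by omega)
    · exact (hCsub p (Finset.mem_powerset.1 hS hm)).2.1 hp
    · have := (hCsub x (Finset.mem_sdiff.1 hx).1).1
      omega
  have hbdel : ∀ S ∈ C.powerset, b ∉ DelF S ∧ (n - b) ∉ DelF S := by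
    intro S hS
    constructor
    · intro hmem
      simp only [hDelF, Finset.mem_union, Finset.mem_image] at hmem
      rcases hmem with (hm | hm) | ⟨x, hx, hxe⟩
      · exact absurd (hforced_big b hm) (by omega)
      · exact (hCsub b (Finset.mem_powerset.1 hS hm)).2.2.1 rfl
      · have := (hCsub x (Finset.mem_sdiff.1 hx).1).1
        omega
    · intro hmem
      simp only [hDelF, Finset.mem_union, Finset.mem_image] at hmem
      rcases hmem with (hm | hm) | ⟨x, hx, hxe⟩
      · rw [hforced] at hm
        simp only [Finset.mem_union, Finset.mem_image, Finset.mem_filter] at hm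
        rcases hm with ⟨x, ⟨hx1, hx2, hx3⟩, hxe⟩ | ⟨hx1, hx2⟩
        · have h2x := (mem_reps.1 hx1).2.2.2.2
          omega
        · omega
      · have := (hCsub _ (Finset.mem_powerset.1 hS hm)).1
        omega
      · have h1 := hCsub x (Finset.mem_sdiff.1 hx).1
        have h2x := h1.1
        have : x = b := by omega
        exact h1.2.2.1 this
  -- every non-chosen alive representation of n is destroyed
  have huniq : ∀ S ∈ C.powerset, ∀ x ∈ reps A (s.D ∪ DelF S) n, x = b := by
    intro S hS x hx
    rw [reps_union_filter, Finset.mem_filter, ← hSR] at hx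
    obtain ⟨hxSR, hxD, hxD2⟩ := hx
    by_contra hxb
    by_cases hxP : x ∈ s.P
    · apply hxD2
      simp only [hDelF, Finset.mem_union]
      left; left
      rw [hforced, Finset.mem_union]
      left
      rw [Finset.mem_image]
      exact ⟨x, Finset.mem_filter.2 ⟨hxSR, hxP, hxb⟩, rfl⟩
    by_cases hx2 : 2*x = n
    · apply hxD
      simp only [hDelF, Finset.mem_union]
      left; left
      rw [hforced, Finset.mem_union]
      right
      exact Finset.mem_filter.2 ⟨hxSR, hx2⟩
    have hxC : x ∈ C := by
      rw [hC, Finset.mem_filter]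
      exact ⟨hxSR, hxP, hxb, hx2⟩
    by_cases hxS : x ∈ S
    · apply hxD
      simp only [hDelF, Finset.mem_union]
      left; right
      exact hxS
    · apply hxD2
      simp only [hDelF, Finset.mem_union, Finset.mem_image]
      right
      exact ⟨x, Finset.mem_sdiff.2 ⟨hxC, hxS⟩, rfl⟩
  have hbkeep : ∀ S ∈ C.powerset, b ∈ reps A (s.D ∪ DelF S) n := by
    intro S hS
    rw [reps_union_filter, Finset.mem_filter, ← hSR]
    exact ⟨hbSR, (hbdel S hS).1, (hbdel S hS).2⟩
  -- counting setup
  set lit : ℕ → Option (ℕ × Bool) := fun z =>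
    if z ∈ C then some (z, true) else
      if z ≤ n ∧ n - z ∈ C then some (n - z, false) else none with hlit
  have hlitT : ∀ z cc, lit z = some (cc, true) ↔ (z ∈ C ∧ cc = z) := by
    intro z cc
    simp only [hlit]
    split_ifs with h1 h2
    · simp only [Option.some_inj, Prod.mk.injEq, and_true]
      constructor
      · intro h; exact ⟨h1, h.symm⟩
      · rintro ⟨-, h⟩; exact h.symm
    · simp only [Option.some_inj, Prod.mk.injEq]
      constructor
      · rintro ⟨-, h⟩; exact absurd h (by simp)
      · rintro ⟨h, -⟩; exact absurd h h1
    · simp only [reduceCtorEq, false_iff]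
      intro h; exact absurd h.1 h1
  have hlitF : ∀ z cc, lit z = some (cc, false) ↔
      (z ∉ C ∧ z ≤ n ∧ n - z ∈ C ∧ cc = n - z) := by
    intro z cc
    simp only [hlit]
    split_ifs with h1 h2
    · simp only [Option.some_inj, Prod.mk.injEq]
      constructor
      · rintro ⟨-, h⟩; exact absurd h (by simp)
      · rintro ⟨h, -⟩; exact absurd h1 h
    · simp only [Option.some_inj, Prod.mk.injEq, and_true]
      constructor
      · intro h; exact ⟨h1, h2.1, h2.2, h.symm⟩
      · rintro ⟨-, -, -, h⟩; exact h.symm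
    · simp only [reduceCtorEq, false_iff]
      intro hcon
      exact h2 ⟨hcon.2.1, hcon.2.2.1⟩
  have hlitC : ∀ z p, lit z = some p → p.1 ∈ C := by
    rintro z ⟨cc, bb⟩ hp
    cases bb
    · obtain ⟨-, -, h3, rfl⟩ := (hlitF z cc).1 hp
      exact h3
    · obtain ⟨h1, rfl⟩ := (hlitT z cc).1 hp
      exact h1
  have hinj : ∀ z z' p, lit z = some p → lit z' = some p → z = z' := by
    rintro z z' ⟨cc, bb⟩ hp hp'
    cases bb
    · have h1 := (hlitF z cc).1 hp
      have h2 := (hlitF z' cc).1 hp'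
      omega
    · have h1 := (hlitT z cc).1 hp
      have h2 := (hlitT z' cc).1 hp'
      omega
  have hkill : ∀ S ∈ C.powerset, ∀ z, z ∉ forced → (z ∈ DelF S ↔ delP lit S z) := by
    intro S hS z hzf
    have hSsub := Finset.mem_powerset.1 hS
    constructor
    · intro hz
      simp only [hDelF, Finset.mem_union, Finset.mem_image] at hz
      rcases hz with (hz | hz) | ⟨x, hx, hxe⟩
      · exact absurd hz hzf
      · exact ⟨(z, true), (hlitT z z).2 ⟨hSsub hz, rfl⟩, by simp [hz]⟩
      · obtain ⟨hxC, hxS⟩ := Finset.mem_sdiff.1 hx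
        have h2x := (hCsub x hxC).1
        have hzn : z ≤ n := by omega
        have hnz : n - z = x := by omega
        have hzC : z ∉ C := by
          intro hzC
          have h1 := (hCsub z hzC).1
          have h2 := (hCsub x hxC).2.2.2
          omega
        refine ⟨(x, false), (hlitF z x).2 ⟨hzC, hzn, by rw [hnz]; exact hxC, hnz.symm⟩, ?_⟩
        simp [hxS]
    · rintro ⟨⟨cc, bb⟩, hl, hiff⟩
      cases bb
      · obtain ⟨hzC, hzn, hnzC, rfl⟩ := (hlitF z _).1 hl
        simp only [hDelF, Finset.mem_union, Finset.mem_image]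
        right
        refine ⟨n - z, Finset.mem_sdiff.2 ⟨hnzC, ?_⟩, by omega⟩
        intro hmem
        exact (by simpa using hiff.1 hmem : False)
      · obtain ⟨hzC, rfl⟩ := (hlitT z _).1 hl
        simp only [hDelF, Finset.mem_union]
        left; right
        exact hiff.2 rfl
  -- the free representations of m and their count
  set free : ℕ → Finset ℕ :=
    fun m => (reps A s.D m).filter (fun u => u ∉ forced ∧ (m - u) ∉ forced) with hfree
  have hfreecard : ∀ m, s.M < m → c₂ * Real.log m ≤ (((free m).card : ℕ) : ℝ) := by
    intro m hm
    have hmN : N₁ ≤ m := le_trans hN₁M (le_of_lt hm)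
    have hm2 : 2 ≤ m := hN₁.trans hmN
    have hm1R : (1:ℝ) < m := by exact_mod_cast (by omega : 1 < m)
    have hlogm : 0 < Real.log m := Real.log_pos hm1R
    have hM0 : (0:ℝ) < s.M := by
      have : 2 ≤ s.M := hN₁.trans hN₁M
      exact_mod_cast (by omega : 0 < s.M)
    have hMm : Real.log s.M ≤ Real.log m := by
      apply Real.log_le_log hM0
      exact_mod_cast le_of_lt hm
    have halive : c₁ * Real.log m ≤ ((reps A s.D m).card : ℝ) := by
      have h1 := hAc m hmN
      have h2 := card_reps_ge A s.D m
      have h2' : ((reps A ∅ m).card : ℝ) ≤ ((reps A s.D m).card : ℝ) + (s.D.card : ℝ) := by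
        exact_mod_cast h2
      have h3 : (s.D.card : ℝ) ≤ (c - c₁) * Real.log m :=
        le_trans hDcard (mul_le_mul_of_nonneg_left hMm hd01.le)
      have hexp : (c - c₁) * Real.log m = c * Real.log m - c₁ * Real.log m := by ring
      linarith
    by_cases h2m : 2*m < n
    · have hfeq : free m = reps A s.D m := by
        simp only [hfree]
        apply Finset.filter_true_of_mem
        intro u hu
        have hu' := (mem_reps.1 hu).2.2.2.2
        constructor
        · intro hf; have := hforced_big u hf; omega
        · intro hf; have := hforced_big (m - u) hf; omega
      rw [hfeq]
      have : c₂ * Real.log m ≤ c₁ * Real.log m :=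
        mul_le_mul_of_nonneg_right (le_of_lt hc₁₂) hlogm.le
      linarith
    · have h4 := card_reps_filter A s.D forced m
      have h5 : ((reps A s.D m).card : ℝ) - (forced.card : ℝ) ≤ ((free m).card : ℝ) := by
        simp only [hfree]
        have h4' : ((reps A s.D m).card : ℝ) ≤
            (((reps A s.D m).filter (fun u => u ∉ forced ∧ (m - u) ∉ forced)).card : ℝ)
              + (forced.card : ℝ) := by exact_mod_cast h4
        linarith
      have h6 : (forced.card : ℝ) ≤ (s.P.card : ℝ) + 1 := by exact_mod_cast hforced_card
      have h7 : Real.log ((n:ℝ)/2) ≤ Real.log m := by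
        apply Real.log_le_log
        · have : 0 < n := by omega
          have : (0:ℝ) < n := by exact_mod_cast this
          linarith
        · have : (n:ℝ) ≤ 2*m := by exact_mod_cast (by omega : n ≤ 2*m)
          linarith
      have h8 : ((s.P.card : ℝ) + 1) ≤ (c₁ - c₂) * Real.log m :=
        le_trans hnexp (mul_le_mul_of_nonneg_left h7 hd12.le)
      have hexp : (c₁ - c₂) * Real.log m = c₁ * Real.log m - c₂ * Real.log m := by ring
      linarith
  -- there is a good pattern S
  set M' : ℕ := max (max (s.M + 1) (n + 1))
      (max L (Nat.ceil (Real.exp (((s.D.card + s.P.card + 2*n + 4 : ℕ) : ℝ) / (c - c₁))))) with hM'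
  have hgood : ∃ S ∈ C.powerset, ∀ m ∈ Finset.Ioc s.M M', m ≠ n →
      (reps A (s.D ∪ DelF S) m).Nonempty := by
    by_contra hbad
    push_neg at hbad
    set W := (Finset.Ioc s.M M').filter (fun m => m ≠ n) with hW
    set Bad : ℕ → Finset (Finset ℕ) :=
      fun m => C.powerset.filter (fun S => reps A (s.D ∪ DelF S) m = ∅) with hBad
    have hcover : C.powerset ⊆ W.biUnion Bad := by
      intro S hS
      obtain ⟨m, hm, hmn, hempty⟩ := hbad S hS
      rw [Finset.mem_biUnion]
      refine ⟨m, Finset.mem_filter.2 ⟨hm, hmn⟩, Finset.mem_filter.2 ⟨hS, ?_⟩⟩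
      exact hempty
    have hcard1 : (2:ℕ) ^ C.card ≤ ∑ m ∈ W, (Bad m).card := by
      calc (2:ℕ)^C.card = C.powerset.card := (Finset.card_powerset C).symm
        _ ≤ (W.biUnion Bad).card := Finset.card_le_card hcover
        _ ≤ ∑ m ∈ W, (Bad m).card := Finset.card_biUnion_le
    have hperm : ∀ m ∈ W, ((Bad m).card : ℝ)
        ≤ (2:ℝ)^C.card * ((m:ℝ) ^ (-(c₂ * Real.log (4/3)))) := by
      intro m hm'
      obtain ⟨hmIoc, hmn⟩ := Finset.mem_filter.1 hm'
      obtain ⟨hmM, hmM'⟩ := Finset.mem_Ioc.1 hmIoc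
      have hsub : Bad m ⊆ KK lit (fun u => m - u) C (free m) := by
        intro S hS
        obtain ⟨hS1, hS2⟩ := Finset.mem_filter.1 hS
        rw [KK, Finset.mem_filter]
        refine ⟨hS1, ?_⟩
        intro u hu
        simp only [hfree] at hu
        obtain ⟨huR, huf1, huf2⟩ := Finset.mem_filter.1 hu
        by_contra hku
        rw [killed] at hku
        push_neg at hku
        have h1 : u ∉ DelF S := fun h => hku.1 ((hkill S hS1 u huf1).1 h)
        have h2 : m - u ∉ DelF S := fun h => hku.2 ((hkill S hS1 (m-u) huf2).1 h)
        have hmem : u ∈ reps A (s.D ∪ DelF S) m := by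
          rw [reps_union_filter, Finset.mem_filter]
          exact ⟨huR, h1, h2⟩
        rw [hS2] at hmem
        exact absurd hmem (Finset.notMem_empty u)
      have hdisjF : ∀ u ∈ free m, ∀ w ∈ free m, u ≠ w →
          (w ≠ u ∧ w ≠ m - u ∧ m - w ≠ u ∧ m - w ≠ m - u) := by
        intro u hu w hw huw
        simp only [hfree] at hu hw
        have h1 := (mem_reps.1 (Finset.mem_filter.1 hu).1).2.2.2.2
        have h2 := (mem_reps.1 (Finset.mem_filter.1 hw).1).2.2.2.2
        omega
      have hccF : ∀ u ∈ free m, ∀ cc bb bb', lit u = some (cc, bb) →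
          lit (m - u) = some (cc, bb') → m - u = u := by
        intro u hu cc bb bb' hl1 hl2
        simp only [hfree] at hu
        have hum := (mem_reps.1 (Finset.mem_filter.1 hu).1).2.2.2.2
        cases bb <;> cases bb'
        · obtain ⟨-, h1, -, h2⟩ := (hlitF u cc).1 hl1
          obtain ⟨-, h3, -, h4⟩ := (hlitF (m-u) cc).1 hl2
          omega
        · obtain ⟨-, h1, -, h2⟩ := (hlitF u cc).1 hl1
          obtain ⟨-, h4⟩ := (hlitT (m-u) cc).1 hl2
          omega
        · obtain ⟨-, h2⟩ := (hlitT u cc).1 hl1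
          obtain ⟨-, h3, -, h4⟩ := (hlitF (m-u) cc).1 hl2
          omega
        · obtain ⟨-, h2⟩ := (hlitT u cc).1 hl1
          obtain ⟨-, h4⟩ := (hlitT (m-u) cc).1 hl2
          omega
      have hcount := count_main lit (fun u => m - u) C hlitC hinj (free m) hdisjF hccF
      have hBadKK : (Bad m).card ≤ (KK lit (fun u => m - u) C (free m)).card :=
        Finset.card_le_card hsub
      have hN : (Bad m).card * 4 ^ (free m).card ≤ 2 ^ C.card * 3 ^ (free m).card :=
        le_trans (Nat.mul_le_mul_right _ hBadKK) hcount
      have hNR : ((Bad m).card : ℝ) * 4 ^ (free m).card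
          ≤ 2 ^ C.card * 3 ^ (free m).card := by exact_mod_cast hN
      have h4pos : (0:ℝ) < 4 ^ (free m).card := by positivity
      have hR1 : ((Bad m).card : ℝ) ≤ (2:ℝ)^C.card * ((3:ℝ)/4) ^ (free m).card := by
        rw [div_pow, ← mul_div_assoc, le_div_iff₀ h4pos]
        linarith
      have hm1 : 1 ≤ m := by omega
      have hR2 : ((3:ℝ)/4) ^ (free m).card ≤ (m:ℝ) ^ (-(c₂ * Real.log (4/3))) :=
        pow34_le hm1 (hfreecard m hmM)
      calc ((Bad m).card : ℝ) ≤ (2:ℝ)^C.card * ((3:ℝ)/4) ^ (free m).card := hR1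
        _ ≤ (2:ℝ)^C.card * ((m:ℝ) ^ (-(c₂ * Real.log (4/3)))) := by
            apply mul_le_mul_of_nonneg_left hR2 (by positivity)
    have hsum : ∑ m ∈ W, ((m:ℝ) ^ (-(c₂ * Real.log (4/3)))) < 1 := by
      apply hMt
      intro m hm'
      obtain ⟨hmIoc, -⟩ := Finset.mem_filter.1 hm'
      have := (Finset.mem_Ioc.1 hmIoc).1
      omega
    have h2C : (0:ℝ) < 2 ^ C.card := by positivity
    have hfin : ((2:ℕ)^C.card : ℝ) ≤ (2:ℝ)^C.card *
        ∑ m ∈ W, ((m:ℝ) ^ (-(c₂ * Real.log (4/3)))) := by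
      calc ((2:ℕ)^C.card : ℝ) ≤ ((∑ m ∈ W, (Bad m).card : ℕ) : ℝ) := by exact_mod_cast hcard1
        _ = ∑ m ∈ W, ((Bad m).card : ℝ) := by push_cast; ring
        _ ≤ ∑ m ∈ W, (2:ℝ)^C.card * ((m:ℝ) ^ (-(c₂ * Real.log (4/3)))) :=
            Finset.sum_le_sum hperm
        _ = (2:ℝ)^C.card * ∑ m ∈ W, ((m:ℝ) ^ (-(c₂ * Real.log (4/3)))) := by
            rw [Finset.mul_sum]
    have : ((2:ℕ)^C.card : ℝ) < (2:ℝ)^C.card := by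
      calc ((2:ℕ)^C.card : ℝ) ≤ _ := hfin
        _ < (2:ℝ)^C.card * 1 := by
            apply mul_lt_mul_of_pos_left hsum h2C
        _ = (2:ℝ)^C.card := mul_one _
    rw [show ((2:ℕ)^C.card : ℝ) = (2:ℝ)^C.card by push_cast; ring] at this
    exact lt_irrefl _ this
  obtain ⟨S, hSC, hSgood⟩ := hgood
  set D' := s.D ∪ DelF S with hD'
  have hnonempty : ∀ m ∈ Finset.Ioc s.M M', (reps A D' m).Nonempty := by
    intro m hm
    by_cases hmn : m = n
    · subst hmn
      exact ⟨b, hbkeep S hSC⟩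
    · exact hSgood m hm hmn
  set P' : Finset ℕ := s.P ∪ (Finset.Ioc s.M M').biUnion
      (fun m => if h : (reps A D' m).Nonempty
        then {(reps A D' m).min' h, m - (reps A D' m).min' h} else ∅) with hP'
  have hMM' : s.M < M' := by
    have : s.M + 1 ≤ M' := le_trans (le_max_left _ _) (le_max_left _ _)
    omega
  have hnM' : n < M' := by
    have : n + 1 ≤ M' := le_trans (le_max_right _ _) (le_max_left _ _)
    omega
  have hLM' : L ≤ M' := le_trans (le_max_left _ _) (le_max_right _ _)
  have hnIoc : n ∈ Finset.Ioc s.M M' := Finset.mem_Ioc.2 ⟨hnM, le_of_lt hnM'⟩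
  -- membership in P' for the protected pair of each窗口 m
  have hP'mem : ∀ m ∈ Finset.Ioc s.M M', ∀ h : (reps A D' m).Nonempty,
      (reps A D' m).min' h ∈ P' ∧ m - (reps A D' m).min' h ∈ P' := by
    intro m hm h
    constructor
    · rw [hP', Finset.mem_union]
      right
      rw [Finset.mem_biUnion]
      exact ⟨m, hm, by rw [dif_pos h]; simp⟩
    · rw [hP', Finset.mem_union]
      right
      rw [Finset.mem_biUnion]
      exact ⟨m, hm, by rw [dif_pos h]; simp⟩
  -- min' of the witness n is b
  have hminb : ∀ h : (reps A D' n).Nonempty, (reps A D' n).min' h = b := by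
    intro h
    exact huniq S hSC _ (Finset.min'_mem _ h)
  have hbP' : b ∈ P' ∧ (n - b) ∈ P' := by
    have h := hnonempty n hnIoc
    have h1 := hP'mem n hnIoc h
    rw [hminb h] at h1
    exact h1
  -- the new state
  refine ⟨⟨D', P', M'⟩, ?_, ?_, ?_, ?_, ?_, n, hnL, hbP'.1, hbP'.2, huniq S hSC, hbkeep S hSC⟩
  · -- invariant
    have hP'new : ∀ x ∈ P', x ∈ s.P ∨ ∃ m, m ∈ Finset.Ioc s.M M' ∧
        ∃ h : (reps A D' m).Nonempty,
          (x = (reps A D' m).min' h ∨ x = m - (reps A D' m).min' h) := by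
      intro x hx
      rw [hP', Finset.mem_union] at hx
      rcases hx with hx | hx
      · exact Or.inl hx
      · right
        rw [Finset.mem_biUnion] at hx
        obtain ⟨m, hm, hxm⟩ := hx
        by_cases h : (reps A D' m).Nonempty
        · rw [dif_pos h] at hxm
          simp only [Finset.mem_insert, Finset.mem_singleton] at hxm
          exact ⟨m, hm, h, hxm⟩
        · rw [dif_neg h] at hxm
          exact absurd hxm (Finset.notMem_empty x)
    refine ⟨?_, ?_, ?_, ?_, ?_, ?_⟩
    · -- P' ⊆ A
      intro x hx
      rcases hP'new x (Finset.mem_coe.1 hx) with hx' | ⟨m, hm, h, (rfl | rfl)⟩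
      · exact hPA hx'
      · exact (mem_reps.1 (Finset.min'_mem _ h)).1
      · exact (mem_reps.1 (Finset.min'_mem _ h)).2.1
    · -- Disjoint P' D'
      rw [Finset.disjoint_left]
      intro x hx
      rcases hP'new x hx with hx' | ⟨m, hm, h, (rfl | rfl)⟩
      · intro hmem
        rw [hD', Finset.mem_union] at hmem
        rcases hmem with hmem | hmem
        · exact Finset.disjoint_left.1 hPD hx' hmem
        · exact hPdel S hSC x hx' hmem
      · exact (mem_reps.1 (Finset.min'_mem _ h)).2.2.1
      · exact (mem_reps.1 (Finset.min'_mem _ h)).2.2.2.1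
    · -- N₁ ≤ M'
      exact le_trans hN₁M (le_of_lt hMM')
    · -- Mt ≤ M'
      exact le_trans hMtM (le_of_lt hMM')
    · -- card bound
      have hDelcard : D'.card ≤ s.D.card + s.P.card + 2*n + 4 := by
        have h1 : (DelF S).card ≤ forced.card + S.card
            + ((C \ S).image (fun x => n - x)).card := by
          simp only [hDelF]
          refine le_trans (Finset.card_union_le _ _) ?_
          have := Finset.card_union_le forced S
          omega
        have h2 : S.card ≤ C.card := Finset.card_le_card (Finset.mem_powerset.1 hSC)
        have h3 : ((C \ S).image (fun x => n - x)).card ≤ C.card :=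
          le_trans Finset.card_image_le (Finset.card_le_card Finset.sdiff_subset)
        have h4 : C.card ≤ n + 1 := by
          calc C.card ≤ SR.card := Finset.card_le_card (Finset.filter_subset _ _)
            _ ≤ (Finset.range (n+1)).card := Finset.card_le_card
                (by rw [hSR]; exact Finset.filter_subset _ _)
            _ = n + 1 := Finset.card_range _
        have h5 := Finset.card_union_le s.D (DelF S)
        rw [hD']
        omega
      have hM'exp : ((s.D.card + s.P.card + 2*n + 4 : ℕ) : ℝ) ≤ (c - c₁) * Real.log M' := by
        have h2ceil : Nat.ceil (Real.exp (((s.D.card + s.P.card + 2*n + 4 : ℕ) : ℝ) / (c - c₁)))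
            ≤ M' := le_trans (le_max_right _ _) (le_max_right _ _)
        have h3 : Real.exp (((s.D.card + s.P.card + 2*n + 4 : ℕ) : ℝ) / (c - c₁)) ≤ (M' : ℝ) :=
          le_trans (Nat.le_ceil _) (by exact_mod_cast h2ceil)
        have h5 := Real.log_le_log (Real.exp_pos _) h3
        rw [Real.log_exp] at h5
        calc ((s.D.card + s.P.card + 2*n + 4 : ℕ) : ℝ)
            = (c - c₁) * (((s.D.card + s.P.card + 2*n + 4 : ℕ) : ℝ) / (c - c₁)) := by
              rw [mul_div_cancel₀ _ hd01.ne']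
          _ ≤ (c - c₁) * Real.log M' := mul_le_mul_of_nonneg_left h5 hd01.le
      calc ((D'.card : ℕ) : ℝ) ≤ ((s.D.card + s.P.card + 2*n + 4 : ℕ) : ℝ) := by
            exact_mod_cast hDelcard
        _ ≤ (c - c₁) * Real.log M' := hM'exp
    · -- coverage
      intro m hm1 hm2
      have hm2' : m ≤ M' := hm2
      by_cases hmM : m ≤ s.M
      · obtain ⟨x, hx, hxP, hxP2⟩ := hcov m hm1 hmM
        refine ⟨x, ?_, ?_, ?_⟩
        · rw [hD', reps_union_filter, Finset.mem_filter]
          exact ⟨hx, hPdel S hSC x hxP, hPdel S hSC _ hxP2⟩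
        · rw [hP']; exact Finset.mem_union_left _ hxP
        · rw [hP']; exact Finset.mem_union_left _ hxP2
      · have hmIoc : m ∈ Finset.Ioc s.M M' := by
          rw [Finset.mem_Ioc]
          omega
        have h := hnonempty m hmIoc
        obtain ⟨h1, h2⟩ := hP'mem m hmIoc h
        exact ⟨(reps A D' m).min' h, Finset.min'_mem _ h, h1, h2⟩
  · exact Finset.subset_union_left
  · rw [hP']; exact Finset.subset_union_left
  · exact le_of_lt hMM'
  · exact hLM'


include hAc hN₁ hc₁ in
lemma base_exists (hc0 : 0 < c) : ∃ s₀ : St, Inv A c c₁ N₁ Mt s₀ := by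
  classical
  set M₀ := max N₁ Mt with hM₀
  have hne : ∀ m, N₁ ≤ m → (reps A (∅ : Finset ℕ) m).Nonempty := by
    intro m hm
    have h := hAc m hm
    have hm2 : 2 ≤ m := hN₁.trans hm
    have hlm : 0 < Real.log m := Real.log_pos (by exact_mod_cast (by omega : 1 < m))
    rw [← Finset.card_pos]
    by_contra h0
    push_neg at h0
    interval_cases h1 : (reps A (∅ : Finset ℕ) m).card
    simp only [Nat.cast_zero] at h
    nlinarith
  set P₀ : Finset ℕ := (Finset.Icc N₁ M₀).biUnion
      (fun m => if h : (reps A (∅ : Finset ℕ) m).Nonempty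
        then {(reps A (∅ : Finset ℕ) m).min' h, m - (reps A (∅ : Finset ℕ) m).min' h}
        else ∅) with hP₀
  have hP₀mem : ∀ x ∈ P₀, ∃ m, m ∈ Finset.Icc N₁ M₀ ∧
      ∃ h : (reps A (∅ : Finset ℕ) m).Nonempty,
        (x = (reps A ∅ m).min' h ∨ x = m - (reps A ∅ m).min' h) := by
    intro x hx
    rw [hP₀, Finset.mem_biUnion] at hx
    obtain ⟨m, hm, hxm⟩ := hx
    by_cases h : (reps A (∅ : Finset ℕ) m).Nonempty
    · rw [dif_pos h] at hxm
      simp only [Finset.mem_insert, Finset.mem_singleton] at hxm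
      exact ⟨m, hm, h, hxm⟩
    · rw [dif_neg h] at hxm
      exact absurd hxm (Finset.notMem_empty x)
  refine ⟨⟨∅, P₀, M₀⟩, ?_, ?_, ?_, ?_, ?_, ?_⟩
  · intro x hx
    rcases hP₀mem x (Finset.mem_coe.1 hx) with ⟨m, hm, h, (rfl | rfl)⟩
    · exact (mem_reps.1 (Finset.min'_mem _ h)).1
    · exact (mem_reps.1 (Finset.min'_mem _ h)).2.1
  · exact Finset.disjoint_empty_right _
  · exact le_max_left _ _
  · exact le_max_right _ _
  · have hM₀1 : (1:ℝ) ≤ (M₀:ℕ) := by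
      have : 2 ≤ M₀ := hN₁.trans (le_max_left _ _)
      exact_mod_cast (by omega : 1 ≤ M₀)
    have := Real.log_nonneg hM₀1
    simp only [Finset.card_empty, Nat.cast_zero]
    have hd01 : (0:ℝ) < c - c₁ := by linarith
    positivity
  · intro m hm1 hm2
    have h := hne m hm1
    refine ⟨(reps A ∅ m).min' h, Finset.min'_mem _ h, ?_, ?_⟩
    · rw [hP₀, Finset.mem_biUnion]
      exact ⟨m, Finset.mem_Icc.2 ⟨hm1, hm2⟩, by rw [dif_pos h]; simp⟩
    · rw [hP₀, Finset.mem_biUnion]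
      exact ⟨m, Finset.mem_Icc.2 ⟨hm1, hm2⟩, by rw [dif_pos h]; simp⟩

/-- one step of the construction, scheduled by `k ↦ (Nat.unpair k).1` -/
noncomputable def nextSt (hc0 : 0 < c) (k : ℕ) (p : {s : St // Inv A c c₁ N₁ Mt s}) :
    {s : St // Inv A c c₁ N₁ Mt s} :=
  if h : (k.unpair.1 ∈ A ∧ k.unpair.1 ∉ p.1.D) then
    ⟨(step A c c₁ c₂ N₁ Mt hAc hN₁ hc₁ hc₁₂ hc₂0 hMt hc0 p.1 p.2 k.unpair.1 k
        h.1 h.2).choose,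
      (step A c c₁ c₂ N₁ Mt hAc hN₁ hc₁ hc₁₂ hc₂0 hMt hc0 p.1 p.2 k.unpair.1 k
        h.1 h.2).choose_spec.1⟩
  else p

lemma nextSt_mono (hc0 : 0 < c) (k : ℕ) (p : {s : St // Inv A c c₁ N₁ Mt s}) :
    p.1.D ⊆ (nextSt A c c₁ c₂ N₁ Mt hAc hN₁ hc₁ hc₁₂ hc₂0 hMt hc0 k p).1.D ∧
    p.1.P ⊆ (nextSt A c c₁ c₂ N₁ Mt hAc hN₁ hc₁ hc₁₂ hc₂0 hMt hc0 k p).1.P ∧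
    p.1.M ≤ (nextSt A c c₁ c₂ N₁ Mt hAc hN₁ hc₁ hc₁₂ hc₂0 hMt hc0 k p).1.M := by
  unfold nextSt
  split_ifs with h
  · have hspec := (step A c c₁ c₂ N₁ Mt hAc hN₁ hc₁ hc₁₂ hc₂0 hMt hc0 p.1 p.2 k.unpair.1 k
        h.1 h.2).choose_spec
    exact ⟨hspec.2.1, hspec.2.2.1, hspec.2.2.2.1⟩
  · exact ⟨subset_rfl, subset_rfl, le_rfl⟩

lemma nextSt_wit (hc0 : 0 < c) (k : ℕ) (p : {s : St // Inv A c c₁ N₁ Mt s})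
    (h1 : k.unpair.1 ∈ A) (h2 : k.unpair.1 ∉ p.1.D) :
    k ≤ (nextSt A c c₁ c₂ N₁ Mt hAc hN₁ hc₁ hc₁₂ hc₂0 hMt hc0 k p).1.M ∧
    ∃ n, k ≤ n ∧
      k.unpair.1 ∈ (nextSt A c c₁ c₂ N₁ Mt hAc hN₁ hc₁ hc₁₂ hc₂0 hMt hc0 k p).1.P ∧
      (n - k.unpair.1) ∈ (nextSt A c c₁ c₂ N₁ Mt hAc hN₁ hc₁ hc₁₂ hc₂0 hMt hc0 k p).1.P ∧
      (∀ x ∈ reps A (nextSt A c c₁ c₂ N₁ Mt hAc hN₁ hc₁ hc₁₂ hc₂0 hMt hc0 k p).1.D n,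
        x = k.unpair.1) ∧
      k.unpair.1 ∈ reps A (nextSt A c c₁ c₂ N₁ Mt hAc hN₁ hc₁ hc₁₂ hc₂0 hMt hc0 k p).1.D n := by
  unfold nextSt
  rw [dif_pos ⟨h1, h2⟩]
  have hspec := (step A c c₁ c₂ N₁ Mt hAc hN₁ hc₁ hc₁₂ hc₂0 hMt hc0 p.1 p.2 k.unpair.1 k
      h1 h2).choose_spec
  exact ⟨hspec.2.2.2.2.1, hspec.2.2.2.2.2⟩

/-- the chain of states -/
noncomputable def chain (hc0 : 0 < c) (s₀ : {s : St // Inv A c c₁ N₁ Mt s}) :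
    ℕ → {s : St // Inv A c c₁ N₁ Mt s}
  | 0 => s₀
  | (k+1) => nextSt A c c₁ c₂ N₁ Mt hAc hN₁ hc₁ hc₁₂ hc₂0 hMt hc0 k
      (chain hc0 s₀ k)

include hAc hN₁ hc₁ hc₁₂ hc₂0 hMt in
theorem main (hc0 : 0 < c) : ∃ B ⊆ A, IsMinimalAsymptoticBasisOfOrder B 2 := by
  classical
  obtain ⟨s₀, hs₀⟩ := base_exists A c c₁ N₁ Mt hAc hN₁ hc₁ hc0
  set ch : ℕ → {s : St // Inv A c c₁ N₁ Mt s} :=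
    chain A c c₁ c₂ N₁ Mt hAc hN₁ hc₁ hc₁₂ hc₂0 hMt hc0 ⟨s₀, hs₀⟩ with hch
  have hchsucc : ∀ k, ch (k+1) =
      nextSt A c c₁ c₂ N₁ Mt hAc hN₁ hc₁ hc₁₂ hc₂0 hMt hc0 k (ch k) := by
    intro k
    rw [hch]
    rfl
  have hmono : ∀ j k, j ≤ k → (ch j).1.D ⊆ (ch k).1.D ∧ (ch j).1.P ⊆ (ch k).1.P := by
    intro j k hjk
    induction k with
    | zero =>
      have : j = 0 := by omega
      subst this
      exact ⟨subset_rfl, subset_rfl⟩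
    | succ k ih =>
      by_cases h : j = k + 1
      · subst h; exact ⟨subset_rfl, subset_rfl⟩
      · have hjk' : j ≤ k := by omega
        have h1 := ih hjk'
        have h2 := nextSt_mono A c c₁ c₂ N₁ Mt hAc hN₁ hc₁ hc₁₂ hc₂0 hMt hc0 k (ch k)
        rw [← hchsucc k] at h2
        exact ⟨h1.1.trans h2.1, h1.2.trans h2.2.1⟩
  set B : Set ℕ := {x | x ∈ A ∧ ∀ k, x ∉ (ch k).1.D} with hB
  have hBA : B ⊆ A := fun x hx => hx.1
  have hPB : ∀ k x, x ∈ (ch k).1.P → x ∈ B := by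
    intro k x hx
    refine ⟨(ch k).2.1 (Finset.mem_coe.2 hx), ?_⟩
    intro j
    by_cases hjk : j ≤ k
    · intro hmem
      exact Finset.disjoint_left.1 (ch k).2.2.1 hx ((hmono j k hjk).1 hmem)
    · have hkj : k ≤ j := by omega
      intro hmem
      exact Finset.disjoint_left.1 (ch j).2.2.1 ((hmono k j hkj).2 hx) hmem
  -- witnesses for minimality
  have hwit : ∀ b N, b ∈ B → ∃ n, N ≤ n ∧ (n - b) ∈ B ∧ 2*b ≤ n ∧
      (∀ x, x ∈ A → (n - x) ∈ A → (∀ j, x ∉ (ch j).1.D) →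
        (∀ j, (n - x) ∉ (ch j).1.D) → 2*x ≤ n → x = b) := by
    intro b N hb
    set k := Nat.pair b N with hk
    have hsched : k.unpair.1 = b := by rw [hk, Nat.unpair_pair]
    have hbD : k.unpair.1 ∉ (ch k).1.D := by rw [hsched]; exact hb.2 k
    have hbA' : k.unpair.1 ∈ A := by rw [hsched]; exact hb.1
    obtain ⟨hkM, n, hkn, hbP, hnbP, huniq, hbrep⟩ :=
      nextSt_wit A c c₁ c₂ N₁ Mt hAc hN₁ hc₁ hc₁₂ hc₂0 hMt hc0 k (ch k) hbA' hbD
    rw [← hchsucc k] at hbP hnbP huniq hbrep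
    rw [hsched] at hbP hnbP huniq hbrep
    have hNk : N ≤ k := Nat.right_le_pair b N
    refine ⟨n, by omega, hPB (k+1) _ hnbP, (mem_reps.1 hbrep).2.2.2.2, ?_⟩
    intro x hxA hxA2 hxD hxD2 hx2
    apply huniq
    rw [mem_reps]
    exact ⟨hxA, hxA2, hxD (k+1), hxD2 (k+1), hx2⟩
  -- M is unbounded along the chain
  have hMinf : ∀ j, ∃ k, j ≤ (ch k).1.M := by
    intro j
    obtain ⟨b₀, -, hb₀P, -⟩ := (ch 0).2.2.2.2.2.2 N₁ le_rfl (ch 0).2.2.2.1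
    have hb₀B : b₀ ∈ B := hPB 0 b₀ hb₀P
    set k := Nat.pair b₀ j with hk
    have hsched : k.unpair.1 = b₀ := by rw [hk, Nat.unpair_pair]
    have hbD : k.unpair.1 ∉ (ch k).1.D := by rw [hsched]; exact hb₀B.2 k
    have hbA' : k.unpair.1 ∈ A := by rw [hsched]; exact hb₀B.1
    obtain ⟨hkM, -⟩ :=
      nextSt_wit A c c₁ c₂ N₁ Mt hAc hN₁ hc₁ hc₁₂ hc₂0 hMt hc0 k (ch k) hbA' hbD
    rw [← hchsucc k] at hkM
    exact ⟨k + 1, le_trans (Nat.right_le_pair b₀ j) hkM⟩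
  have hbasis : IsAsymptoticBasisOfOrder B 2 := by
    rw [IsAsymptoticBasisOfOrder, eventually_atTop]
    refine ⟨N₁, fun m hm => ?_⟩
    obtain ⟨k, hk⟩ := hMinf m
    obtain ⟨x, hx, hxP, hxP2⟩ := (ch k).2.2.2.2.2.2 m hm hk
    have hx' := mem_reps.1 hx
    refine ⟨![x, m - x], ?_, ?_⟩
    · intro i
      fin_cases i
      · exact hPB k x hxP
      · exact hPB k (m - x) hxP2
    · rw [Fin.sum_univ_two]
      show x + (m - x) = m
      omega
  refine ⟨B, hBA, hbasis, ?_⟩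
  intro B' hB' hbasis'
  obtain ⟨b, hbB, hbB'⟩ := Set.exists_of_ssubset hB'
  rw [IsAsymptoticBasisOfOrder, eventually_atTop] at hbasis'
  obtain ⟨N, hN⟩ := hbasis'
  obtain ⟨n, hnN, hnbB, hb2, huniq⟩ := hwit b N hbB
  obtain ⟨cc, hcc, hsum⟩ := hN n hnN
  rw [Fin.sum_univ_two] at hsum
  have hcc0 : cc 0 ∈ B := hB'.1 (hcc 0)
  have hcc1 : cc 1 ∈ B := hB'.1 (hcc 1)
  set x := min (cc 0) (cc 1) with hx
  have hxb : x = b := by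
    apply huniq
    · rcases min_choice (cc 0) (cc 1) with h | h <;> rw [hx, h]
      · exact hcc0.1
      · exact hcc1.1
    · have : n - x = max (cc 0) (cc 1) := by
        rw [hx]
        omega
      rw [this]
      rcases max_choice (cc 0) (cc 1) with h | h <;> rw [h]
      · exact hcc0.1
      · exact hcc1.1
    · intro j
      rcases min_choice (cc 0) (cc 1) with h | h <;> rw [hx, h]
      · exact hcc0.2 j
      · exact hcc1.2 j
    · intro j
      have : n - x = max (cc 0) (cc 1) := by
        rw [hx]
        omega
      rw [this]
      rcases max_choice (cc 0) (cc 1) with h | h <;> rw [h]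
      · exact hcc0.2 j
      · exact hcc1.2 j
    · omega
  have : b ∈ B' := by
    rcases min_choice (cc 0) (cc 1) with h | h
    · rw [← hxb, hx, h]; exact hcc 0
    · rw [← hxb, hx, h]; exact hcc 1
  exact hbB' this

end Main



lemma natCard_eq (A : Set ℕ) (m : ℕ) :
    Nat.card {p : ℕ × ℕ // p.1 ∈ A ∧ p.2 ∈ A ∧ p.1 ≤ p.2 ∧ p.1 + p.2 = m}
      = (reps A ∅ m).card := by
  classical
  have e : {x : ℕ // x ∈ reps A ∅ m} ≃
      {p : ℕ × ℕ // p.1 ∈ A ∧ p.2 ∈ A ∧ p.1 ≤ p.2 ∧ p.1 + p.2 = m} := by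
    refine ⟨fun x => ⟨(x.1, m - x.1), ?_⟩, fun p => ⟨p.1.1, ?_⟩, ?_, ?_⟩
    · obtain ⟨x, hx⟩ := x
      rw [mem_reps] at hx
      obtain ⟨h1, h2, -, -, h5⟩ := hx
      exact ⟨h1, h2, by show x ≤ m - x; omega, by show x + (m - x) = m; omega⟩
    · obtain ⟨⟨a, b⟩, ha, hb, hab, hsum⟩ := p
      rw [mem_reps]
      simp only at ha hb hab hsum ⊢
      have hb' : m - a = b := by omega
      refine ⟨ha, by rw [hb']; exact hb, by simp, by simp, by omega⟩
    · rintro ⟨x, hx⟩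
      rfl
    · rintro ⟨⟨a, b⟩, ha, hb, hab, hsum⟩
      simp only at ha hb hab hsum ⊢
      apply Subtype.ext
      simp only
      have : m - a = b := by omega
      rw [this]
  rw [← Nat.card_congr e, Nat.card_eq_finsetCard]

end EN

theorem erdos_nathanson_contains_minimal_basis (A : Set ℕ) (f : ℕ → ℕ)
    (hf : ∀ n : ℕ, f n =
      Nat.card {p : ℕ × ℕ // p.1 ∈ A ∧ p.2 ∈ A ∧ p.1 ≤ p.2 ∧ p.1 + p.2 = n})
    (c : ℝ) (hc : 1 / Real.log (4 / 3) < c)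
    (hlarge : ∀ᶠ n : ℕ in atTop, c * Real.log (n : ℝ) < (f n : ℝ)) :
    ∃ B ⊆ A, IsMinimalAsymptoticBasisOfOrder B 2 := by
  obtain ⟨c₁, c₂, hc₂0, hc₁₂, hc₁, hβ⟩ := EN.constants_exist hc
  obtain ⟨Mt, hMt⟩ := EN.tail_bound hβ
  rw [Filter.eventually_atTop] at hlarge
  obtain ⟨N₀, hN₀⟩ := hlarge
  have hAc : ∀ m, max N₀ 2 ≤ m → c * Real.log m < ((EN.reps A ∅ m).card : ℝ) := by
    intro m hm
    have h := hN₀ m (le_trans (le_max_left _ _) hm)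
    rwa [hf, EN.natCard_eq] at h
  have hc0 : 0 < c := by
    have h1 : 0 < Real.log (4/3) := Real.log_pos (by norm_num)
    have : 0 < 1 / Real.log (4/3) := by positivity
    linarith
  exact EN.main A c c₁ c₂ (max N₀ 2) Mt hAc (le_max_right _ _) hc₁ hc₁₂ hc₂0 hMt hc0
end

section
/- (Erdős–Nathanson) There exists a partition of the nonnegative integers into disjoint sets A and B such that A is a minimal asymptotic basis of order 2 and B is a maximal asymptotic nonbasis of order 2. -/
open Pointwise Filter

namespace EN

def c : ℕ → ℕ
  | 0 => 1
  | k+1 => 2 * c k + (if k % 2 = 1 then 1 else 0)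

lemma c_succ (k : ℕ) : c (k+1) = 2 * c k + (if k % 2 = 1 then 1 else 0) := rfl

lemma c_pos (k : ℕ) : 0 < c k := by
  induction k with
  | zero => simp [c]
  | succ k ih => rw [c_succ]; omega

lemma c_succ_le (k : ℕ) : c (k+1) ≤ 2 * c k + 1 := by rw [c_succ]; split <;> omega

lemma c_succ_ge (k : ℕ) : 2 * c k ≤ c (k+1) := by rw [c_succ]; omega

lemma c_lt_succ (k : ℕ) : c k < c (k+1) := by have := c_pos k; have := c_succ_ge k; omega

lemma c_mono : StrictMono c := strictMono_nat_of_lt_succ c_lt_succ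

lemma c_le_of_le {j k : ℕ} (h : j ≤ k) : c j ≤ c k := c_mono.monotone h

lemma lt_c_succ_self (k : ℕ) : k < c k := by
  induction k with
  | zero => simp [c]
  | succ k ih => have := c_succ_ge k; omega

lemma c_even_succ {k : ℕ} (h : k % 2 = 0) : c (k+1) = 2 * c k := by rw [c_succ]; simp [h]

lemma c_odd_succ {k : ℕ} (h : k % 2 = 1) : c (k+1) = 2 * c k + 1 := by rw [c_succ]; simp [h]

/-- Block index: the unique `k` with `c k < m ≤ c (k+1)` (for `m ≥ 2`). -/
lemma exists_block (m : ℕ) : ∃ k, m ≤ c (k+1) := ⟨m, by have := lt_c_succ_self (m+1); omega⟩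

def Kf (m : ℕ) : ℕ := Nat.find (exists_block m)

lemma Kf_le (m : ℕ) : m ≤ c (Kf m + 1) := Nat.find_spec (exists_block m)

lemma Kf_gt {m : ℕ} (h : 2 ≤ m) : c (Kf m) < m := by
  unfold Kf
  rcases Nat.eq_zero_or_pos (Nat.find (exists_block m)) with h0 | h0
  · rw [h0]; show c 0 < m; simp [c]; omega
  · obtain ⟨j, hj⟩ := Nat.exists_eq_succ_of_ne_zero (n := Nat.find (exists_block m)) (by omega)
    have hmin : ¬ m ≤ c (j + 1) := Nat.find_min (exists_block m) (by omega)
    rw [hj]; simp only [Nat.succ_eq_add_one]; omega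

lemma Kf_eq {m k : ℕ} (h1 : c k < m) (h2 : m ≤ c (k+1)) : Kf m = k := by
  have hle : Kf m ≤ k := Nat.find_le h2
  by_contra hne
  have hlt : Kf m < k := lt_of_le_of_ne hle hne
  have : c (Kf m + 1) ≤ c k := c_le_of_le (by omega)
  have := Kf_le m
  omega



/-- scheduled exception value for (odd) block `k` -/
def aaux (f : ℕ → Bool) (k : ℕ) : ℕ :=
  if 1 ≤ (Nat.unpair ((k - 1)/2)).2 ∧ (Nat.unpair ((k - 1)/2)).2 ≤ c (k-1) then
    (if f (Nat.unpair ((k - 1)/2)).2 then (Nat.unpair ((k - 1)/2)).2 else c (k-1))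
  else c (k-1)

def chi : ℕ → Bool
  | 0 => false
  | 1 => true
  | (m+2) =>
    if Kf (m+2) % 2 = 0 then
      (if 2 * (c (Kf (m+2) + 1) - (m+2)) < c (Kf (m+2))
        then !chi (c (Kf (m+2) + 1) - (m+2)) else true)
    else
      (if h : 1 ≤ (Nat.unpair ((Kf (m+2) - 1)/2)).2 ∧ (Nat.unpair ((Kf (m+2) - 1)/2)).2 ≤ c (Kf (m+2) - 1) then
        (if c (Kf (m+2) + 1) - (m+2) =
            (if chi ((Nat.unpair ((Kf (m+2) - 1)/2)).2) then (Nat.unpair ((Kf (m+2) - 1)/2)).2 else c (Kf (m+2) - 1))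
          then true
          else if 2 * (c (Kf (m+2) + 1) - (m+2)) ≤ c (Kf (m+2))
            then !chi (c (Kf (m+2) + 1) - (m+2)) else false)
      else
        (if c (Kf (m+2) + 1) - (m+2) = c (Kf (m+2) - 1) then true
          else if 2 * (c (Kf (m+2) + 1) - (m+2)) ≤ c (Kf (m+2))
            then !chi (c (Kf (m+2) + 1) - (m+2)) else false))
  termination_by m => m
  decreasing_by
  all_goals
    first
    | (have hgt : c (Kf (m+2)) < m + 2 := Kf_gt (by omega)
       have hle2 : c (Kf (m+2) + 1) ≤ 2 * c (Kf (m+2)) + 1 := c_succ_le _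
       omega)
    | (have hgt : c (Kf (m+2)) < m + 2 := Kf_gt (by omega)
       have hmono : c (Kf (m+2) - 1) ≤ c (Kf (m+2)) := c_le_of_le (by omega)
       omega)

def aa (k : ℕ) : ℕ := aaux chi k


lemma chi_zero : chi 0 = false := by rw [chi]
lemma chi_one : chi 1 = true := by rw [chi]

lemma two_le_of_block {k m : ℕ} (h1 : c k < m) : 2 ≤ m := by
  have := c_pos k; omega

lemma chi_block_even {k m : ℕ} (hk : k % 2 = 0) (h1 : c k < m) (h2 : m ≤ c (k+1)) :
    chi m = if 2 * (c (k+1) - m) < c k then !chi (c (k+1) - m) else true := by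
  obtain ⟨mm, rfl⟩ : ∃ mm, m = mm + 2 := ⟨m - 2, by have := two_le_of_block h1; omega⟩
  have hKf : Kf (mm+2) = k := Kf_eq h1 h2
  rw [chi, hKf]
  simp [hk]

lemma chi_block_odd {k m : ℕ} (hk : k % 2 = 1) (h1 : c k < m) (h2 : m ≤ c (k+1)) :
    chi m = if (c (k+1) - m) = aa k then true
            else if 2 * (c (k+1) - m) ≤ c k then !chi (c (k+1) - m) else false := by
  obtain ⟨mm, rfl⟩ : ∃ mm, m = mm + 2 := ⟨m - 2, by have := two_le_of_block h1; omega⟩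
  have hKf : Kf (mm+2) = k := Kf_eq h1 h2
  rw [chi, hKf]
  have : ¬ (k % 2 = 0) := by omega
  simp only [this, if_false]
  unfold aa aaux
  split <;> rfl



lemma aa_le (k : ℕ) : aa k ≤ c (k-1) := by
  unfold aa aaux; split
  · split
    · next h _ => exact h.2
    · exact le_refl _
  · exact le_refl _

lemma aa_pos (k : ℕ) : 1 ≤ aa k := by
  have := c_pos (k-1)
  unfold aa aaux; split
  · split
    · next h _ => exact h.1
    · omega
  · omega

lemma mirrorN' {k y : ℕ} (hk : k % 2 = 0) (h1 : c k < y) (h2 : y ≤ c (k+1))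
    (h3 : 2 * (c (k+1) - y) < c k) : chi y = !chi (c (k+1) - y) := by
  rw [chi_block_even hk h1 h2]; simp [h3]

lemma solidN' {k y : ℕ} (hk : k % 2 = 0) (h1 : c k < y) (h2 : c k ≤ 2 * (c (k+1) - y)) :
    chi y = true := by
  have hck := c_pos k
  have h2' : y ≤ c (k+1) := by omega
  rw [chi_block_even hk h1 h2']
  have : ¬ (2 * (c (k+1) - y) < c k) := by omega
  simp [this]

lemma mirrorE' {k y : ℕ} (hk : k % 2 = 1) (h1 : c k < y) (h2 : y ≤ c (k+1))
    (h3 : 2 * (c (k+1) - y) ≤ c k) (h4 : c (k+1) - y ≠ aa k) :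
    chi y = !chi (c (k+1) - y) := by
  rw [chi_block_odd hk h1 h2]; simp [h3, h4]

lemma solidE' {k y : ℕ} (hk : k % 2 = 1) (h1 : c k < y) (h2 : c k < 2 * (c (k+1) - y)) :
    chi y = false := by
  have hck := c_pos k
  have h2' : y ≤ c (k+1) := by omega
  have hkpos : 1 ≤ k := by omega
  have hc2 : c k = 2 * c (k-1) := by
    have : c ((k-1)+1) = 2 * c (k-1) := c_even_succ (by omega)
    have hk1 : k - 1 + 1 = k := by omega
    rw [hk1] at this; exact this
  have haa : aa k ≤ c (k-1) := aa_le k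
  have h4 : c (k+1) - y ≠ aa k := by omega
  rw [chi_block_odd hk h1 h2']
  have h5 : ¬ (2 * (c (k+1) - y) ≤ c k) := by omega
  simp [h4, h5]

lemma excE' {k : ℕ} (hk : k % 2 = 1) : chi (c (k+1) - aa k) = true := by
  have haa : aa k ≤ c (k-1) := aa_le k
  have haa1 : 1 ≤ aa k := aa_pos k
  have hmono : c (k-1) ≤ c k := c_le_of_le (by omega)
  have hlt : c k < c (k+1) := c_lt_succ k
  have h1 : c k < c (k+1) - aa k := by
    have := c_odd_succ hk; omega
  have h2 : c (k+1) - aa k ≤ c (k+1) := by omega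
  have h3 : c (k+1) - (c (k+1) - aa k) = aa k := by omega
  rw [chi_block_odd hk h1 h2, h3]
  simp

lemma chi_center : ∀ j, chi (c j) = true := by
  intro j
  induction j with
  | zero => exact chi_one
  | succ j _ =>
    have h1 : c j < c (j+1) := c_lt_succ j
    have h2 : c (j+1) ≤ c (j+1) := le_refl _
    have h0 : c (j+1) - c (j+1) = 0 := by omega
    have hcj := c_pos j
    rcases Nat.even_or_odd j with he | ho
    · have hj : j % 2 = 0 := Nat.even_iff.mp he
      rw [mirrorN' hj h1 h2 (by omega), h0, chi_zero]; rfl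
    · have hj : j % 2 = 1 := Nat.odd_iff.mp ho
      have haa1 := aa_pos j
      rw [mirrorE' hj h1 h2 (by omega) (by omega), h0, chi_zero]; rfl

lemma chi_two : chi 2 = true := by
  have h1 : c 0 < 2 := by simp [c]
  have h2 : (2:ℕ) ≤ c 1 := by simp [c]
  have := mirrorN' (k := 0) rfl h1 h2 (by simp [c])
  rw [this]
  have : c 1 - 2 = 0 := by simp [c]
  rw [this, chi_zero]; rfl

/-- scheduled exceptions hit every A-element infinitely often -/
lemma aa_schedule (a0 : ℕ) (ha : chi a0 = true) (N : ℕ) :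
    ∃ k, k % 2 = 1 ∧ N ≤ k ∧ aa k = a0 := by
  have ha0 : 1 ≤ a0 := by
    rcases Nat.eq_zero_or_pos a0 with h | h
    · rw [h, chi_zero] at ha; simp at ha
    · exact h
  set P := Nat.pair (N + a0) a0 with hP
  refine ⟨2 * P + 1, by omega, ?_, ?_⟩
  · have : N + a0 ≤ P := Nat.left_le_pair _ _
    omega
  · have hup : (Nat.unpair ((2 * P + 1 - 1) / 2)).2 = a0 := by
      have : (2 * P + 1 - 1) / 2 = P := by omega
      rw [this, hP, Nat.unpair_pair]
    have hle : a0 ≤ c (2 * P + 1 - 1) := by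
      have h1 : a0 ≤ P := Nat.right_le_pair _ _
      have h2 : (2 * P + 1 - 1) ≥ a0 := by omega
      have := lt_c_succ_self (2 * P + 1 - 1)
      have := c_le_of_le h2
      have := lt_c_succ_self a0
      omega
    unfold aa aaux
    rw [hup]
    have hle2 : a0 ≤ c (2 * P) := by simpa using hle
    simp [ha0, hle2, ha]



/-- Ess centers have a unique A-representation through `aa k`. -/
lemma ess_unique {k x y : ℕ} (hk : k % 2 = 1) (hsum : x + y = c (k+1))
    (hx : chi x = true) (hy : chi y = true) : x = aa k ∨ y = aa k := by
  have hC : c (k+1) = 2 * c k + 1 := c_odd_succ hk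
  -- wlog the smaller part is ≤ c k
  rcases le_or_gt x (c k) with hxle | hxgt
  · -- x ≤ c k; y = C - x : in block k
    by_cases hax : x = aa k
    · left; exact hax
    · exfalso
      have h1 : c k < y := by omega
      have h2 : y ≤ c (k+1) := by omega
      have hj : c (k+1) - y = x := by omega
      rcases le_or_gt (2 * x) (c k) with hsml | hbig
      · have := mirrorE' hk h1 h2 (by omega) (by omega)
        rw [hj, hx] at this; rw [this] at hy; simp at hy
      · have := solidE' hk h1 (by omega)
        rw [this] at hy; simp at hy
  · -- x > c k forces y ≤ c k : symmetric
    have hyle : y ≤ c k := by omega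
    by_cases hay : y = aa k
    · right; exact hay
    · exfalso
      have h1 : c k < x := hxgt
      have h2 : x ≤ c (k+1) := by omega
      have hj : c (k+1) - x = y := by omega
      rcases le_or_gt (2 * y) (c k) with hsml | hbig
      · have := mirrorE' hk h1 h2 (by omega) (by omega)
        rw [hj, hy] at this; rw [this] at hx; simp at hx
      · have := solidE' hk h1 (by omega)
        rw [this] at hx; simp at hx

/-- N-centers are not sums of two B-elements. -/
lemma ncenter_not_BB {k x y : ℕ} (hk : k % 2 = 0) (hsum : x + y = c (k+1))
    (hx : chi x = false) (hy : chi y = false) : False := by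
  have hC : c (k+1) = 2 * c k := c_even_succ hk
  have key : ∀ u v : ℕ, u + v = c (k+1) → u ≤ c k → chi u = false → chi v = false → False := by
    intro u v huv hule hu hv
    rcases eq_or_lt_of_le hule with heq | hlt
    · have : v = c k := by omega
      rw [this, chi_center] at hv; simp at hv
    · have h1 : c k < v := by omega
      have h2 : v ≤ c (k+1) := by omega
      have hj : c (k+1) - v = u := by omega
      rcases lt_or_ge (2 * u) (c k) with hsml | hbig
      · have := mirrorN' hk h1 h2 (by omega)
        rw [hj, hu] at this; rw [this] at hv; simp at hv
      · have := solidN' hk h1 (by omega)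
        rw [this] at hv; simp at hv
  rcases le_or_gt x (c k) with h | h
  · exact key x y hsum h hx hy
  · exact key y x (by omega) (by omega) hy hx



lemma chi_aa (k : ℕ) : chi (aa k) = true := by
  unfold aa aaux
  split
  · split
    · next h hv => exact hv
    · exact chi_center _
  · exact chi_center _

/-- mirror point lemma, odd block: image of a B-point is an A-point -/
lemma mirrorE_pt {k j : ℕ} (hk : k % 2 = 1) (hj1 : 1 ≤ j) (hj2 : 2*j ≤ c k)
    (hjf : chi j = false) : chi (c (k+1) - j) = true := by
  have h4 : j ≠ aa k := by
    intro hh; rw [hh, chi_aa] at hjf; simp at hjf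
  have hC := c_odd_succ hk
  have hck := c_pos k
  have hjj : c (k+1) - (c (k+1) - j) = j := by omega
  have := mirrorE' hk (y := c (k+1) - j) (by omega) (by omega) (by omega) (by rw [hjj]; exact h4)
  rw [hjj, hjf] at this
  rw [this]; rfl

/-- mirror point lemma, even block: image of an A-point is a B-point -/
lemma mirrorN_pt {k j : ℕ} (hk : k % 2 = 0) (hj1 : 1 ≤ j) (hj2 : 2*j < c k)
    (hjt : chi j = true) : chi (c (k+1) - j) = false := by
  have hC := c_even_succ hk
  have hck := c_pos k
  have hjj : c (k+1) - (c (k+1) - j) = j := by omega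
  have := mirrorN' hk (y := c (k+1) - j) (by omega) (by omega) (by omega)
  rw [hjj, hjt] at this
  rw [this]; rfl

/-- A+A coverage, N-blocks: n ∈ [c(p+1)+2, c(p+2)+1], p odd ≥ 3. -/
lemma AcovN (p n : ℕ) (hp : p % 2 = 1) (hp3 : 3 ≤ p)
    (hlo : c (p+1) + 2 ≤ n) (hhi : n ≤ c (p+2) + 1) :
    ∃ x y, x + y = n ∧ chi x = true ∧ chi y = true := by
  have e1 : c (p+1) = 2 * c p + 1 := c_odd_succ hp
  have e2 : c (p+2) = 2 * c (p+1) := c_even_succ (by omega)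
  have hcp : 5 ≤ c p := by
    have h5 : c 2 ≤ c p := c_le_of_le (by omega)
    have : c 2 = 5 := rfl
    omega
  have hk1 : (p+1) % 2 = 0 := by omega
  have n1 : c (p+1+1) = c (p+2) := rfl
  rcases le_or_gt (2*n) (3 * c (p+1) + 1) with hA1 | hA1
  · -- A1 : (1, n-1), n-1 in solid
    exact ⟨1, n-1, by omega, chi_one, solidN' hk1 (by omega) (by omega)⟩
  rcases le_or_gt n (2 * c (p+1) - 1) with hA2 | hA2
  · -- A2 : (c p, n - c p)
    exact ⟨c p, n - c p, by omega, chi_center p, solidN' hk1 (by omega) (by omega)⟩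
  rcases eq_or_lt_of_le (Nat.succ_le_of_lt hA2) with hA3 | hA3
  · -- A3 : n = 2c : (c, c)
    exact ⟨c (p+1), c (p+1), by omega, chi_center _, chi_center _⟩
  · -- A4 : n = 2c+1 : (1, 2c)
    have hn : n = c (p+2) + 1 := by omega
    refine ⟨1, c (p+2), by omega, chi_one, chi_center _⟩

/-- A+A coverage, Ess-blocks: n ∈ [c(p+3)+2, c(p+4)], p even ≥ 2. -/
lemma AcovE (p n : ℕ) (hp : p % 2 = 0) (hp2 : 2 ≤ p)
    (hlo : c (p+3) + 2 ≤ n) (hhi : n ≤ c (p+4)) :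
    ∃ x y, x + y = n ∧ chi x = true ∧ chi y = true := by
  have e1 : c (p+1) = 2 * c p := c_even_succ hp
  have e2 : c (p+2) = 2 * c (p+1) + 1 := c_odd_succ (by omega)
  have e3 : c (p+3) = 2 * c (p+2) := c_even_succ (by omega)
  have e4 : c (p+4) = 2 * c (p+3) + 1 := c_odd_succ (by omega)
  have hcp : 5 ≤ c p := by
    have h5 : c 2 ≤ c p := c_le_of_le (by omega)
    have : c 2 = 5 := rfl
    omega
  have hk2 : (p+2) % 2 = 0 := by omega
  have hk1 : (p+1) % 2 = 1 := by omega
  have hk3 : (p+3) % 2 = 1 := by omega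
  have n1 : c (p+0+1) = c (p+1) := rfl
  have n2 : c (p+1+1) = c (p+2) := rfl
  have n3 : c (p+2+1) = c (p+3) := rfl
  have n4 : c (p+3+1) = c (p+4) := rfl
  -- notation: f = c p, e = c (p+1) = 2f, d = c (p+2) = 2e+1, cst = c (p+3) = 2d, C = c (p+4)
  rcases le_or_gt n (3 * c (p+2) - 1) with hE1 | hE1
  · -- E1 : solid_{p+2}^2 ; solid = [d+1, 3e+1]
    rcases le_or_gt n (c (p+2) + 1 + (3 * c (p+1) + 1)) with h | h
    · exact ⟨c (p+2) + 1, n - (c (p+2) + 1), by omega,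
        solidN' hk2 (by omega) (by omega), solidN' hk2 (by omega) (by omega)⟩
    · exact ⟨n - (3 * c (p+1) + 1), 3 * c (p+1) + 1, by omega,
        solidN' hk2 (by omega) (by omega), solidN' hk2 (by omega) (by omega)⟩
  rcases eq_or_lt_of_le (Nat.succ_le_of_lt hE1) with hE15 | hE15
  · -- E1.5 : n = 3d : (d, 2d)
    exact ⟨c (p+2), c (p+3), by omega, chi_center _, chi_center _⟩
  rcases le_or_gt n (c (p+3) + 3 * c (p+1) + 1) with hE2 | hE2
  · -- E2 : (cst, n - cst) with n - cst in solid_{p+2}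
    exact ⟨c (p+3), n - c (p+3), by omega, chi_center _, solidN' hk2 (by omega) (by omega)⟩
  · -- E3 : deep mirror zone, r = C - n ∈ [0, e+1]
    set r := c (p+4) - n with hr
    have hrle : r ≤ c (p+1) + 1 := by omega
    rcases Nat.eq_zero_or_pos r with hr0 | hrpos
    · -- n = C : exception pair
      have haale : aa (p+3) ≤ c (p+2) := by
        have := aa_le (p+3); simpa using this
      exact ⟨aa (p+3), c (p+4) - aa (p+3), by omega, chi_aa _, excE' hk3⟩
    rcases le_or_gt r (c p) with hE3b | hE3b
    · -- E3b : x = e = c (p+1), j = e + r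
      have hj : chi (c (p+1) + r) = false := solidE' hk1 (by omega) (by omega)
      have hy : chi (c (p+4) - (c (p+1) + r)) = true :=
        mirrorE_pt hk3 (by omega) (by omega) hj
      exact ⟨c (p+1), n - c (p+1), by omega, chi_center _, by
        have : n - c (p+1) = c (p+4) - (c (p+1) + r) := by omega
        rw [this]; exact hy⟩
    rcases le_or_gt r (2 * c p - 1) with hE3c | hE3c
    · -- E3c : x = f + 1, j = f + 1 + r ∈ [e+2, e+f]
      have hx : chi (c p + 1) = true := solidN' hp (by omega) (by omega)
      have hj : chi (c p + 1 + r) = false := solidE' hk1 (by omega) (by omega)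
      have hy : chi (c (p+4) - (c p + 1 + r)) = true :=
        mirrorE_pt hk3 (by omega) (by omega) hj
      exact ⟨c p + 1, n - (c p + 1), by omega, hx, by
        have : n - (c p + 1) = c (p+4) - (c p + 1 + r) := by omega
        rw [this]; exact hy⟩
    · -- E3d : r ∈ {2f, 2f+1} : x = 1, j = 1 + r ∈ {e+1, e+2}
      have hj : chi (1 + r) = false := solidE' hk1 (by omega) (by omega)
      have hy : chi (c (p+4) - (1 + r)) = true :=
        mirrorE_pt hk3 (by omega) (by omega) hj
      exact ⟨1, n - 1, by omega, chi_one, by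
        have : n - 1 = c (p+4) - (1 + r) := by omega
        rw [this]; exact hy⟩



lemma mirrorE_img {k j : ℕ} (hk : k % 2 = 1) (hj1 : 1 ≤ j) (hj2 : 2*j ≤ c k)
    (h4 : j ≠ aa k) : chi (c (k+1) - j) = !chi j := by
  have hC := c_odd_succ hk
  have hck := c_pos k
  have hjj : c (k+1) - (c (k+1) - j) = j := by omega
  have := mirrorE' hk (y := c (k+1) - j) (by omega) (by omega) (by omega)
    (by rw [hjj]; exact h4)
  rw [hjj] at this; exact this

lemma mirrorN_img {k j : ℕ} (hk : k % 2 = 0) (hj1 : 1 ≤ j) (hj2 : 2*j < c k) :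
    chi (c (k+1) - j) = !chi j := by
  have hC := c_even_succ hk
  have hck := c_pos k
  have hjj : c (k+1) - (c (k+1) - j) = j := by omega
  have := mirrorN' hk (y := c (k+1) - j) (by omega) (by omega) (by omega)
  rw [hjj] at this; exact this

/-- B+B coverage, Ess-blocks: n ∈ [c(p+3)+1, c(p+4)], p even ≥ 2. -/
lemma BcovE (p n : ℕ) (hp : p % 2 = 0) (hp2 : 2 ≤ p)
    (hlo : c (p+3) + 1 ≤ n) (hhi : n ≤ c (p+4)) :
    ∃ x y, x + y = n ∧ chi x = false ∧ chi y = false := by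
  have e1 : c (p+1) = 2 * c p := c_even_succ hp
  have e2 : c (p+2) = 2 * c (p+1) + 1 := c_odd_succ (by omega)
  have e3 : c (p+3) = 2 * c (p+2) := c_even_succ (by omega)
  have e4 : c (p+4) = 2 * c (p+3) + 1 := c_odd_succ (by omega)
  have n1 : c (p+0+1) = c (p+1) := rfl
  have n2 : c (p+1+1) = c (p+2) := rfl
  have n3 : c (p+2+1) = c (p+3) := rfl
  have n4 : c (p+3+1) = c (p+4) := rfl
  have hcp : 5 ≤ c p := by
    have h5 : c 2 ≤ c p := c_le_of_le (by omega)
    have : c 2 = 5 := rfl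
    omega
  have hk1 : (p+1) % 2 = 1 := by omega
  have hk2 : (p+2) % 2 = 0 := by omega
  have hk3 : (p+3) % 2 = 1 := by omega
  -- d = c (p+2), cst = c (p+3) = 2d, C = c (p+4) = 2cst+1
  rcases le_or_gt n (3 * c (p+2)) with hC1 | hC1
  · -- C1 : (0, n), n in B-solid
    exact ⟨0, n, by omega, chi_zero, solidE' hk3 (by omega) (by omega)⟩
  rcases le_or_gt n (2 * c (p+3) - 2) with hC2 | hC2
  · -- C2 : near-d B-point + B-solid
    have haa2 := aa_pos (p+1)
    by_cases ha : aa (p+1) = 1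
    · have hx : chi (c (p+2) - 2) = false := by
        rw [mirrorE_img hk1 (by omega) (by omega) (by omega), chi_two]; rfl
      exact ⟨c (p+2) - 2, n - (c (p+2) - 2), by omega, hx,
        solidE' hk3 (by omega) (by omega)⟩
    · have hx : chi (c (p+2) - 1) = false := by
        rw [mirrorE_img hk1 (by omega) (by omega) (by omega), chi_one]; rfl
      exact ⟨c (p+2) - 1, n - (c (p+2) - 1), by omega, hx,
        solidE' hk3 (by omega) (by omega)⟩
  · -- C3/C4/C5 : n ∈ {2cst-1, 2cst, 2cst+1}
    have hx1 : chi (c (p+3) - 1) = false := by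
      rw [mirrorN_img hk2 (by omega) (by omega), chi_one]; rfl
    have hx2 : chi (c (p+3) - 2) = false := by
      rw [mirrorN_img hk2 (by omega) (by omega), chi_two]; rfl
    rcases le_or_gt n (2 * c (p+3) - 1) with h3 | h3
    · exact ⟨c (p+3) - 2, c (p+3) + 1, by omega, hx2,
        solidE' hk3 (by omega) (by omega)⟩
    rcases le_or_gt n (2 * c (p+3)) with h4 | h4
    · exact ⟨c (p+3) - 1, c (p+3) + 1, by omega, hx1,
        solidE' hk3 (by omega) (by omega)⟩
    · exact ⟨c (p+3) - 1, c (p+3) + 2, by omega, hx1,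
        solidE' hk3 (by omega) (by omega)⟩

/-- B+B coverage, N-blocks: n ∈ [c(q+6)+1, c(q+7)-1], q even ≥ 2. -/
lemma BcovN (q n : ℕ) (hq : q % 2 = 0) (hq2 : 2 ≤ q)
    (hlo : c (q+6) + 1 ≤ n) (hhi : n ≤ c (q+7) - 1) :
    ∃ x y, x + y = n ∧ chi x = false ∧ chi y = false := by
  have e1 : c (q+1) = 2 * c q := c_even_succ hq
  have e2 : c (q+2) = 2 * c (q+1) + 1 := c_odd_succ (by omega)
  have e3 : c (q+3) = 2 * c (q+2) := c_even_succ (by omega)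
  have e4 : c (q+4) = 2 * c (q+3) + 1 := c_odd_succ (by omega)
  have e5 : c (q+5) = 2 * c (q+4) := c_even_succ (by omega)
  have e6 : c (q+6) = 2 * c (q+5) + 1 := c_odd_succ (by omega)
  have e7 : c (q+7) = 2 * c (q+6) := c_even_succ (by omega)
  have n1 : c (q+0+1) = c (q+1) := rfl
  have n2 : c (q+1+1) = c (q+2) := rfl
  have n3 : c (q+2+1) = c (q+3) := rfl
  have n4 : c (q+3+1) = c (q+4) := rfl
  have n5 : c (q+4+1) = c (q+5) := rfl
  have n6 : c (q+5+1) = c (q+6) := rfl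
  have n7 : c (q+6+1) = c (q+7) := rfl
  have hcq : 5 ≤ c q := by
    have h5 : c 2 ≤ c q := c_le_of_le (by omega)
    have : c 2 = 5 := rfl
    omega
  have hk3 : (q+3) % 2 = 1 := by omega
  have hk4 : (q+4) % 2 = 0 := by omega
  have hk5 : (q+5) % 2 = 1 := by omega
  have hk6 : (q+6) % 2 = 0 := by omega
  -- g = c(q+1), f = c(q+3), e = c(q+4), d = c(q+5), cst = c(q+6), top = c(q+7)
  rcases le_or_gt n (3 * c (q+5)) with hB1 | hB1
  · -- B1 : B-solid_{q+5}^2, solid = [d+1, 3e]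
    rcases le_or_gt n (c (q+5) + 1 + 3 * c (q+4)) with h | h
    · exact ⟨c (q+5) + 1, n - (c (q+5) + 1), by omega,
        solidE' hk5 (by omega) (by omega), solidE' hk5 (by omega) (by omega)⟩
    · exact ⟨n - 3 * c (q+4), 3 * c (q+4), by omega,
        solidE' hk5 (by omega) (by omega), solidE' hk5 (by omega) (by omega)⟩
  rcases le_or_gt n (c (q+6) - 2 + 3 * c (q+4)) with hB15 | hB15
  · -- B1.5 : near-cst B-point + B-solid
    have haa5 := aa_pos (q+5)
    by_cases ha : aa (q+5) = 1
    · have hx : chi (c (q+6) - 2) = false := by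
        rw [mirrorE_img hk5 (by omega) (by omega) (by omega), chi_two]; rfl
      exact ⟨c (q+6) - 2, n - (c (q+6) - 2), by omega, hx,
        solidE' hk5 (by omega) (by omega)⟩
    · have hx : chi (c (q+6) - 1) = false := by
        rw [mirrorE_img hk5 (by omega) (by omega) (by omega), chi_one]; rfl
      exact ⟨c (q+6) - 1, n - (c (q+6) - 1), by omega, hx,
        solidE' hk5 (by omega) (by omega)⟩
  · -- B2 : deep mirror zone of the N-block, r = top - n ∈ [1, e+2]
    set r := c (q+7) - n with hr
    have hrlo : 1 ≤ r := by omega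
    have hrhi : r ≤ c (q+4) + 2 := by omega
    by_cases hcr : chi r = true
    · -- B2a : (0, n)
      have hn : chi n = false := by
        have : n = c (q+7) - r := by omega
        rw [this, mirrorN_img hk6 (by omega) (by omega), hcr]; rfl
      exact ⟨0, n, by omega, chi_zero, hn⟩
    · -- j-based recipes: x ∈ B, j = x + r ∈ A, y = top - j
      have mk : ∀ x : ℕ, chi x = false → chi (x + r) = true → 2*(x+r) < c (q+6) →
          ∃ u v, u + v = n ∧ chi u = false ∧ chi v = false := by
        intro x hx hj h2j
        refine ⟨x, n - x, by omega, hx, ?_⟩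
        have hy : n - x = c (q+7) - (x + r) := by omega
        rw [hy]
        exact mirrorN_pt hk6 (by omega) h2j hj
      rcases le_or_gt r (c (q+3) + 1) with hB2b | hB2b
      · -- B2b : r ∈ [2, f+1] (r=1 has chi r = true), x near e = c (q+4)
        have hr2 : 2 ≤ r := by
          by_contra h
          have h1 : r = 1 := by omega
          rw [h1, chi_one] at hcr
          exact hcr rfl
        have haa3 := aa_pos (q+3)
        have haa3le := aa_le (q+3)
        by_cases ha : aa (q+3) = 1
        · have hx : chi (c (q+4) - 2) = false := by
            rw [mirrorE_img hk3 (by omega) (by omega) (by omega), chi_two]; rfl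
          rcases eq_or_lt_of_le hr2 with hr2e | hr2g
          · -- r = 2 : j = e, center
            refine mk (c (q+4) - 2) hx ?_ (by omega)
            have : c (q+4) - 2 + r = c (q+4) := by omega
            rw [this]; exact chi_center _
          · -- r ≥ 3 : j = e - 2 + r ∈ solid_{q+4}
            exact mk (c (q+4) - 2) hx (solidN' hk4 (by omega) (by omega)) (by omega)
        · have hx : chi (c (q+4) - 1) = false := by
            rw [mirrorE_img hk3 (by omega) (by omega) (by omega), chi_one]; rfl
          exact mk (c (q+4) - 1) hx (solidN' hk4 (by omega) (by omega)) (by omega)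
      rcases le_or_gt r (c (q+4) - 1) with hB2c | hB2c
      · -- B2c : r ∈ [f+2, e-1], x = f + 1
        have hx : chi (c (q+3) + 1) = false := solidE' hk3 (by omega) (by omega)
        exact mk (c (q+3) + 1) hx (solidN' hk4 (by omega) (by omega)) (by omega)
      · -- B2d : r ∈ {e, e+1, e+2}, x = g - 1
        have hx : chi (c (q+1) - 1) = false := by
          rw [mirrorN_img hq (by omega) (by omega), chi_one]; rfl
        exact mk (c (q+1) - 1) hx (solidN' hk4 (by omega) (by omega)) (by omega)



/-- A+A covers all n > c 6. -/
lemma Acov (n : ℕ) (hn : c 6 < n) :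
    ∃ x y, x + y = n ∧ chi x = true ∧ chi y = true := by
  have h2 : 2 ≤ n := by
    have : c 2 ≤ c 6 := c_le_of_le (by omega)
    have : c 2 = 5 := rfl
    omega
  have hk1 : c (Kf n) < n := Kf_gt h2
  have hk2 : n ≤ c (Kf n + 1) := Kf_le n
  have hk6 : 6 ≤ Kf n := by
    by_contra h
    have : c (Kf n + 1) ≤ c 6 := c_le_of_le (by omega)
    omega
  rcases eq_or_lt_of_le (Nat.succ_le_of_lt hk1) with heq | hlt
  · exact ⟨1, c (Kf n), by omega, chi_one, chi_center _⟩
  · rcases Nat.even_or_odd (Kf n) with he | ho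
    · obtain ⟨p, hp⟩ : ∃ p, Kf n = p + 1 := ⟨Kf n - 1, by omega⟩
      have hpodd : p % 2 = 1 := by
        have := Nat.even_iff.mp he; omega
      have := AcovN p n hpodd (by omega) (by rw [← hp]; omega)
        (by rw [show p + 2 = Kf n + 1 by omega]; omega)
      exact this
    · obtain ⟨p, hp⟩ : ∃ p, Kf n = p + 3 := ⟨Kf n - 3, by omega⟩
      have hpev : p % 2 = 0 := by
        have := Nat.odd_iff.mp ho; omega
      exact AcovE p n hpev (by omega) (by rw [← hp]; omega)
        (by rw [show p + 4 = Kf n + 1 by omega]; omega)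

/-- B+B covers all n > c 8 except the N-centers c(2i+1). -/
lemma Bcov (n : ℕ) (hn : c 8 < n) (hnc : ∀ i, n ≠ c (2*i+1)) :
    ∃ x y, x + y = n ∧ chi x = false ∧ chi y = false := by
  have h2 : 2 ≤ n := by
    have : c 2 ≤ c 8 := c_le_of_le (by omega)
    have : c 2 = 5 := rfl
    omega
  have hk1 : c (Kf n) < n := Kf_gt h2
  have hk2 : n ≤ c (Kf n + 1) := Kf_le n
  have hk8 : 8 ≤ Kf n := by
    by_contra h
    have : c (Kf n + 1) ≤ c 8 := c_le_of_le (by omega)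
    omega
  rcases Nat.even_or_odd (Kf n) with he | ho
  · obtain ⟨q, hq⟩ : ∃ q, Kf n = q + 6 := ⟨Kf n - 6, by omega⟩
    have hqev : q % 2 = 0 := by
      have := Nat.even_iff.mp he; omega
    have hne : n ≠ c (Kf n + 1) := by
      have : Kf n + 1 = 2 * ((Kf n)/2) + 1 := by
        have := Nat.even_iff.mp he; omega
      rw [this]; exact hnc _
    refine BcovN q n hqev (by omega) (by rw [← hq]; omega) ?_
    rw [show q + 7 = Kf n + 1 by omega]
    omega
  · obtain ⟨p, hp⟩ : ∃ p, Kf n = p + 3 := ⟨Kf n - 3, by omega⟩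
    have hpev : p % 2 = 0 := by
      have := Nat.odd_iff.mp ho; omega
    exact BcovE p n hpev (by omega) (by rw [← hp]; omega)
      (by rw [show p + 4 = Kf n + 1 by omega]; omega)


end EN


theorem erdos_nathanson_partition :
    ∃ A B : Set ℕ, Disjoint A B ∧ A ∪ B = Set.univ ∧
      IsMinimalAsymptoticBasisOfOrder A 2 ∧
      IsMaximalAsymptoticNonbasisOfOrder B 2 := by
  classical
  refine ⟨{n : ℕ | EN.chi n = true}, {n : ℕ | EN.chi n = false}, ?_, ?_, ?_, ?_⟩
  · -- disjoint
    rw [Set.disjoint_left]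
    intro n hn hn'
    simp only [Set.mem_setOf_eq] at hn hn'
    rw [hn] at hn'; simp at hn'
  · -- union
    ext n
    simp only [Set.mem_union, Set.mem_setOf_eq, Set.mem_univ, iff_true]
    rcases Bool.eq_false_or_eq_true (EN.chi n) with h | h
    · exact Or.inl h
    · exact Or.inr h

  · -- minimal asymptotic basis
    constructor
    · -- basis
      rw [IsAsymptoticBasisOfOrder, eventually_atTop]
      refine ⟨EN.c 6 + 1, fun n hn => ?_⟩
      obtain ⟨x, y, hxy, hx, hy⟩ := EN.Acov n (by omega)
      refine ⟨![x, y], ?_, ?_⟩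
      · intro i
        fin_cases i <;> simp [hx, hy]
      · simp [Fin.sum_univ_two, hxy]
    · -- no proper subset is a basis
      intro D hD hbasis
      obtain ⟨a0, ha0A, ha0D⟩ := Set.exists_of_ssubset hD
      have ha0chi : EN.chi a0 = true := ha0A
      rw [IsAsymptoticBasisOfOrder, eventually_atTop] at hbasis
      obtain ⟨N, hN⟩ := hbasis
      obtain ⟨k, hk1, hkN, hka⟩ := EN.aa_schedule a0 ha0chi N
      have hnN : N ≤ EN.c (k+1) := by
        have := EN.lt_c_succ_self (k+1); omega
      obtain ⟨cf, hmem, hsum⟩ := hN (EN.c (k+1)) hnN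
      have hsum2 : cf 0 + cf 1 = EN.c (k+1) := by
        rw [← hsum, Fin.sum_univ_two]
      have hx : EN.chi (cf 0) = true := hD.subset (hmem 0)
      have hy : EN.chi (cf 1) = true := hD.subset (hmem 1)
      rcases EN.ess_unique hk1 hsum2 hx hy with h | h
      · exact ha0D (by rw [← hka, ← h]; exact hmem 0)
      · exact ha0D (by rw [← hka, ← h]; exact hmem 1)
  · -- maximal asymptotic nonbasis
    constructor
    · -- not a basis
      intro hbasis
      rw [IsAsymptoticBasisOfOrder, eventually_atTop] at hbasis
      obtain ⟨N, hN⟩ := hbasis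
      have hnN : N ≤ EN.c (2*N+1) := by
        have := EN.lt_c_succ_self (2*N+1); omega
      obtain ⟨cf, hmem, hsum⟩ := hN (EN.c (2*N+1)) hnN
      have hsum2 : cf 0 + cf 1 = EN.c (2*N+1) := by
        rw [← hsum, Fin.sum_univ_two]
      exact EN.ncenter_not_BB (k := 2*N) (by omega) hsum2 (hmem 0) (hmem 1)
    · -- adjoining any element gives a basis
      intro b hb
      have hbchi : EN.chi b = true := by
        simp only [Set.mem_setOf_eq] at hb
        exact Bool.not_eq_false (EN.chi b) |>.mp hb -- may need fix
      have hb1 : 1 ≤ b := by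
        rcases Nat.eq_zero_or_pos b with h | h
        · rw [h, EN.chi_zero] at hbchi; simp at hbchi
        · exact h
      rw [IsAsymptoticBasisOfOrder, eventually_atTop]
      refine ⟨EN.c 8 + 4 * b + 5, fun n hn => ?_⟩
      by_cases hex : ∃ i, n = EN.c (2*i+1)
      · obtain ⟨i, hi⟩ := hex
        have hkev : (2*i) % 2 = 0 := by omega
        have hC : EN.c (2*i+1) = 2 * EN.c (2*i) := EN.c_even_succ hkev
        have hblt : 2 * b < EN.c (2*i) := by omega
        have hy : EN.chi (EN.c (2*i+1) - b) = false :=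
          EN.mirrorN_pt hkev hb1 hblt hbchi
        refine ⟨![b, n - b], ?_, ?_⟩
        · intro j
          fin_cases j
          · right; rfl
          · left
            show EN.chi (n - b) = false
            rw [hi]; exact hy
        · simp [Fin.sum_univ_two]
          omega
      · push_neg at hex
        obtain ⟨x, y, hxy, hx, hy⟩ := EN.Bcov n (by omega) hex
        refine ⟨![x, y], ?_, ?_⟩
        · intro j
          fin_cases j
          · left; exact hx
          · left; exact hy
        · simp [Fin.sum_univ_two, hxy]
end
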